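/- arXiv:2306.16334 — 2 statements merged into one kernel-verified Lean document; each statement's English description precedes it below -/
import Mathlib

section
/- Quantized factors identifiability theorem: Let μ be a probability measure on ℝ^d, absolutely continuous with respect to Lebesgue measure, let S ⊆ ℝ^d be an open connected set with μ(ℝ^d \ S) = 0, and suppose that the set of points of S at which μ has a non-removable discontinuity equals grid_S(A) for a discrete coordination A on S (with at least one threshold along each axis) whose axis-separator set 𝒢(A) has a backbone. Let h : S → S' be any smooth diffeomorphism onto an open set S' ⊆ ℝ^d (h plays the role of the composition g ∘ f of the mixing map with a learned inverse map), let ν be the pushforward of μ under h, and suppose that the set of points of S' at which ν has a non-removable discontinuity equals grid_{S'}(B) for some discrete coordination B on S'. Then there exist a permutation σ of {1,…,d} and a sign vector s ∈ {−1,+1}^d such that for every i ∈ {1,…,d}, with j = σ(i), and every z ∈ S: Q(z_i; A_i) = Q^{s_i}((h z)_j; B_j); that is, the quantized recovered factors agree with the quantized ground-truth factors up to permutation of indices and possible axis reversal. -/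
open Set MeasureTheory Topology

noncomputable section

abbrev Euc (d : ℕ) := EuclideanSpace ℝ (Fin d)

/-- Axis separator: points of `S` whose `i`-th coordinate equals `τ`. -/
def Gamma {d : ℕ} (S : Set (Euc d)) (i : Fin d) (τ : ℝ) : Set (Euc d) :=
  {z | z ∈ S ∧ z i = τ}

/-- Positive half: points of `S` whose `i`-th coordinate is greater than `τ`. -/
def GammaPos {d : ℕ} (S : Set (Euc d)) (i : Fin d) (τ : ℝ) : Set (Euc d) :=
  {z | z ∈ S ∧ τ < z i}

/-- Negative half: points of `S` whose `i`-th coordinate is less than `τ`. -/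
def GammaNeg {d : ℕ} (S : Set (Euc d)) (i : Fin d) (τ : ℝ) : Set (Euc d) :=
  {z | z ∈ S ∧ z i < τ}

/-- `Γ_S(i,τ)` is an axis-separator of `S`: it is nonempty and connected, and both of
its halves are nonempty and connected. (`IsConnected` includes nonemptiness.) -/
def IsAxisSeparator {d : ℕ} (S : Set (Euc d)) (i : Fin d) (τ : ℝ) : Prop :=
  IsConnected (Gamma S i τ) ∧ IsConnected (GammaPos S i τ) ∧ IsConnected (GammaNeg S i τ)

/-- A smooth diffeomorphism from `S` onto `S'` with explicit inverse `hinv`. -/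
structure IsSmoothDiffeoOn {d : ℕ} (h hinv : Euc d → Euc d) (S S' : Set (Euc d)) : Prop where
  mapsTo : Set.MapsTo h S S'
  mapsTo_inv : Set.MapsTo hinv S' S
  left_inv : ∀ z ∈ S, hinv (h z) = z
  right_inv : ∀ z' ∈ S', h (hinv z') = z'
  smooth : ContDiffOn ℝ (⊤ : ℕ∞) h S
  smooth_inv : ContDiffOn ℝ (⊤ : ℕ∞) hinv S'

/-- A discrete coordination on `S`: for each axis `i`, a strictly increasing nonempty tuple
of thresholds, each giving an axis-separator of `S`. -/
structure DiscreteCoordination {d : ℕ} (S : Set (Euc d)) where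
  n : Fin d → ℕ
  n_pos : ∀ i, 0 < n i
  A : (i : Fin d) → Fin (n i) → ℝ
  mono : ∀ i, StrictMono (A i)
  sep : ∀ i k, IsAxisSeparator S i (A i k)

/-- The grid of a discrete coordination: the union of all its axis-separators. -/
def DiscreteCoordination.grid {d : ℕ} {S : Set (Euc d)} (C : DiscreteCoordination S) :
    Set (Euc d) :=
  ⋃ (i : Fin d), ⋃ (k : Fin (C.n i)), Gamma S i (C.A i k)

/-- The parallel-separator-set along axis `i`. -/
def DiscreteCoordination.axisSet {d : ℕ} {S : Set (Euc d)} (C : DiscreteCoordination S)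
    (i : Fin d) : Set (Set (Euc d)) :=
  {H | ∃ k : Fin (C.n i), H = Gamma S i (C.A i k)}

/-- The axis-separator set of a discrete coordination. -/
def DiscreteCoordination.sepSet {d : ℕ} {S : Set (Euc d)} (C : DiscreteCoordination S) :
    Set (Set (Euc d)) :=
  {H | ∃ (i : Fin d) (k : Fin (C.n i)), H = Gamma S i (C.A i k)}

/-- A backbone: a choice of one separator per axis such that they all meet in a single
point and each of them meets every separator of the grid lying on a different axis. -/
def DiscreteCoordination.HasBackbone {d : ℕ} {S : Set (Euc d)}
    (C : DiscreteCoordination S) : Prop :=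
  ∃ kstar : (i : Fin d) → Fin (C.n i),
    (∃ z : Euc d, (⋂ (i : Fin d), Gamma S i (C.A i (kstar i))) = {z}) ∧
    ∀ (i j : Fin d), j ≠ i → ∀ k : Fin (C.n j),
      (Gamma S i (C.A i (kstar i)) ∩ Gamma S j (C.A j k)).Nonempty

/-- Quantization: `Q(x;T) = Σ_k 1[x ≥ T_k]`. -/
def Q {K : ℕ} (x : ℝ) (T : Fin K → ℝ) : ℕ :=
  (Finset.univ.filter fun k : Fin K => T k ≤ x).card

/-- Quantization with order reversal: `Q⁻(x;T) = Σ_k 1[x ≤ T_k]`. -/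
def Qneg {K : ℕ} (x : ℝ) (T : Fin K → ℝ) : ℕ :=
  (Finset.univ.filter fun k : Fin K => x ≤ T k).card

/-- Signed quantization: `Q^{+1} = Q` and `Q^{-1} = Q⁻`. -/
def Qsgn {K : ℕ} (s : ℤ) (x : ℝ) (T : Fin K → ℝ) : ℕ :=
  if s = 1 then Q x T else Qneg x T

/-- `μ` (absolutely continuous w.r.t. Lebesgue) has a non-removable discontinuity at `z`
if every measurable density of `μ` w.r.t. Lebesgue measure is discontinuous at `z`. -/
def HasNonRemovableDiscont {d : ℕ} (μ : Measure (Euc d)) (z : Euc d) : Prop :=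
  ∀ q : Euc d → ENNReal, Measurable q → μ = volume.withDensity q → ¬ ContinuousAt q z

/-- `T` has exactly two connected components, namely `Cp` and `Cm`. -/
def TwoComponents {d : ℕ} (T Cp Cm : Set (Euc d)) : Prop :=
  Cp ≠ Cm ∧
  (∃ x ∈ T, connectedComponentIn T x = Cp) ∧
  (∃ x ∈ T, connectedComponentIn T x = Cm) ∧
  ∀ x ∈ T, connectedComponentIn T x = Cp ∨ connectedComponentIn T x = Cm

/-- The intersection set of a finite family of separators: points lying on at least two
distinct members. -/
def interSet {d M : ℕ} (H : Fin M → Set (Euc d)) : Set (Euc d) :=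
  ⋃ (m : Fin M), ⋃ (m' : Fin M), ⋃ (_ : m ≠ m'), H m ∩ H m'

section Basics

variable {d : ℕ}

lemma continuous_coord (i : Fin d) : Continuous fun z : Euc d => z i :=
  (EuclideanSpace.proj i : Euc d →L[ℝ] ℝ).continuous

lemma isOpen_gammaPos {S : Set (Euc d)} (hS : IsOpen S) (i : Fin d) (τ : ℝ) :
    IsOpen (GammaPos S i τ) :=
  hS.inter (isOpen_Ioi.preimage (continuous_coord i))

lemma isOpen_gammaNeg {S : Set (Euc d)} (hS : IsOpen S) (i : Fin d) (τ : ℝ) :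
    IsOpen (GammaNeg S i τ) :=
  hS.inter (isOpen_Iio.preimage (continuous_coord i))

lemma gamma_index {S : Set (Euc d)} (hS : IsOpen S) {i i' : Fin d} {τ τ' : ℝ}
    (hne : (Gamma S i τ).Nonempty) (heq : Gamma S i τ = Gamma S i' τ') : i = i' ∧ τ = τ' := by
  obtain ⟨z, hzS, hzi⟩ := hne
  have hz' : z ∈ Gamma S i' τ' := heq ▸ (⟨hzS, hzi⟩ : z ∈ Gamma S i τ)
  have hii : i = i' := by
    by_contra hne'
    obtain ⟨ε, hε, hball⟩ := Metric.isOpen_iff.1 hS z hzS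
    set w : Euc d := z + EuclideanSpace.single i' (ε/2) with hw
    have hwS : w ∈ S := by
      apply hball
      have hdist : dist w z = ε / 2 := by
        simp [hw, dist_eq_norm, EuclideanSpace.norm_single]
        exact hε.le
      simp only [Metric.mem_ball, hdist]
      linarith
    have hwi : w i = τ := by
      have : w i = z i + (if i = i' then ε/2 else 0) := by
        simp [hw, EuclideanSpace.single_apply, eq_comm]
      rw [this, if_neg hne', add_zero, hzi]
    have hwmem : w ∈ Gamma S i' τ' := heq ▸ (⟨hwS, hwi⟩ : w ∈ Gamma S i τ)
    have : w i' = z i' + ε/2 := by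
      have : w i' = z i' + (if i' = i' then ε/2 else 0) := by
        simp [hw, EuclideanSpace.single_apply, eq_comm]
      simpa using this
    rw [hwmem.2, hz'.2] at this
    linarith
  refine ⟨hii, ?_⟩
  rw [← hzi, hii, hz'.2]

end Basics


namespace IsSmoothDiffeoOn

variable {d : ℕ} {h hinv : Euc d → Euc d} {S S' : Set (Euc d)}

lemma symm (hd : IsSmoothDiffeoOn h hinv S S') : IsSmoothDiffeoOn hinv h S' S :=
  ⟨hd.mapsTo_inv, hd.mapsTo, hd.right_inv, hd.left_inv, hd.smooth_inv, hd.smooth⟩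

lemma injOn (hd : IsSmoothDiffeoOn h hinv S S') : InjOn h S := fun a ha b hb hab => by
  rw [← hd.left_inv a ha, ← hd.left_inv b hb, hab]

lemma image_eq (hd : IsSmoothDiffeoOn h hinv S S') {O : Set (Euc d)} (hO : O ⊆ S) :
    h '' O = S' ∩ hinv ⁻¹' O := by
  ext y; constructor
  · rintro ⟨x, hx, rfl⟩
    exact ⟨hd.mapsTo (hO hx), by rw [mem_preimage, hd.left_inv x (hO hx)]; exact hx⟩
  · rintro ⟨hy, hy2⟩
    exact ⟨hinv y, hy2, hd.right_inv y hy⟩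

lemma isOpen_image (hd : IsSmoothDiffeoOn h hinv S S') (hS' : IsOpen S') {O : Set (Euc d)}
    (hO : IsOpen O) (hOS : O ⊆ S) : IsOpen (h '' O) := by
  rw [hd.image_eq hOS]
  exact (hd.smooth_inv.continuousOn).isOpen_inter_preimage hS' hO

lemma image_image_inv (hd : IsSmoothDiffeoOn h hinv S S') {O : Set (Euc d)} (hO : O ⊆ S) :
    hinv '' (h '' O) = O := by
  ext x; constructor
  · rintro ⟨y, ⟨x', hx', rfl⟩, rfl⟩
    rwa [hd.left_inv x' (hO hx')]
  · intro hx
    exact ⟨h x, mem_image_of_mem h hx, hd.left_inv x (hO hx)⟩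

lemma hasFDerivAt (hd : IsSmoothDiffeoOn h hinv S S') (hS : IsOpen S) {z : Euc d} (hz : z ∈ S) :
    HasFDerivAt h (fderiv ℝ h z) z :=
  ((hd.smooth.contDiffAt (hS.mem_nhds hz)).differentiableAt (by simp)).hasFDerivAt

lemma comp_eq_id (hd : IsSmoothDiffeoOn h hinv S S') (hS : IsOpen S) (hS' : IsOpen S')
    {z : Euc d} (hz : z ∈ S) :
    (fderiv ℝ hinv (h z)).comp (fderiv ℝ h z) = ContinuousLinearMap.id ℝ (Euc d) := by
  have h1 : HasFDerivAt (hinv ∘ h) ((fderiv ℝ hinv (h z)).comp (fderiv ℝ h z)) z :=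
    (hd.symm.hasFDerivAt hS' (hd.mapsTo hz)).comp z (hd.hasFDerivAt hS hz)
  have h2 : HasFDerivAt (hinv ∘ h) (ContinuousLinearMap.id ℝ (Euc d)) z := by
    have he : (hinv ∘ h) =ᶠ[𝓝 z] id := by
      filter_upwards [hS.mem_nhds hz] with y hy using hd.left_inv y hy
    exact (hasFDerivAt_id z).congr_of_eventuallyEq he
  exact h1.unique h2

lemma comp_eq_id' (hd : IsSmoothDiffeoOn h hinv S S') (hS : IsOpen S) (hS' : IsOpen S')
    {z : Euc d} (hz : z ∈ S) :
    (fderiv ℝ h z).comp (fderiv ℝ hinv (h z)) = ContinuousLinearMap.id ℝ (Euc d) := by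
  have := hd.symm.comp_eq_id hS' hS (hd.mapsTo hz)
  rwa [hd.left_inv z hz] at this

lemma det_ne_zero (hd : IsSmoothDiffeoOn h hinv S S') (hS : IsOpen S) (hS' : IsOpen S')
    {z : Euc d} (hz : z ∈ S) : (fderiv ℝ h z).det ≠ 0 := by
  have h1 := hd.comp_eq_id hS hS' hz
  have h2 : (fderiv ℝ hinv (h z)).det * (fderiv ℝ h z).det = 1 := by
    have := congrArg ContinuousLinearMap.det h1
    simpa [ContinuousLinearMap.det] using this
  intro h0
  rw [h0, mul_zero] at h2
  exact zero_ne_one h2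

lemma row_unique (hd : IsSmoothDiffeoOn h hinv S S') (hS : IsOpen S) (hS' : IsOpen S')
    {z : Euc d} (hz : z ∈ S) {i j1 j2 : Fin d}
    (h1 : ∀ v : Euc d, v i = 0 → fderiv ℝ h z v j1 = 0)
    (h2 : ∀ v : Euc d, v i = 0 → fderiv ℝ h z v j2 = 0) : j1 = j2 := by
  by_contra hne
  have hMN : ∀ y : Euc d, fderiv ℝ h z (fderiv ℝ hinv (h z) y) = y := by
    intro y
    have hcomp := hd.comp_eq_id' hS hS' hz
    have := congrArg (fun L : Euc d →L[ℝ] Euc d => L y) hcomp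
    simpa using this
  have hrow : ∀ (j : Fin d), (∀ v : Euc d, v i = 0 → fderiv ℝ h z v j = 0) →
      ∀ y : Euc d, fderiv ℝ h z y j = y i * fderiv ℝ h z (EuclideanSpace.single i 1) j := by
    intro j hj y
    have hv : (y - y i • EuclideanSpace.single i (1:ℝ)) i = 0 := by
      simp [EuclideanSpace.single_apply]
    have h0 := hj _ hv
    rw [map_sub, _root_.map_smul] at h0
    have heq : (fderiv ℝ h z y - y i • fderiv ℝ h z (EuclideanSpace.single i 1)) j
        = fderiv ℝ h z y j - y i * fderiv ℝ h z (EuclideanSpace.single i 1) j := by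
      simp [smul_eq_mul]
    rw [heq] at h0
    linarith
  have e1 := hrow j1 h1 (fderiv ℝ hinv (h z) (EuclideanSpace.single j1 1))
  have e2 := hrow j1 h1 (fderiv ℝ hinv (h z) (EuclideanSpace.single j2 1))
  have e3 := hrow j2 h2 (fderiv ℝ hinv (h z) (EuclideanSpace.single j2 1))
  rw [hMN] at e1 e2 e3
  simp only [EuclideanSpace.single_apply, if_pos rfl] at e1 e3
  simp only [EuclideanSpace.single_apply] at e2
  rw [if_neg hne] at e2
  have hc1 : fderiv ℝ h z (EuclideanSpace.single i 1) j1 ≠ 0 := by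
    intro hcc
    rw [hcc, mul_zero] at e1
    exact one_ne_zero e1
  have ha2 : (fderiv ℝ hinv (h z) (EuclideanSpace.single j2 1)) i = 0 := by
    rcases mul_eq_zero.1 e2.symm with hh | hh
    · exact hh
    · exact absurd hh hc1
  rw [ha2, zero_mul] at e3
  exact one_ne_zero e3

end IsSmoothDiffeoOn


section MeasureTransfer

variable {d : ℕ}

lemma measurableSet_inter_preimage {S : Set (Euc d)} (hS : IsOpen S) {f : Euc d → Euc d}
    (hf : ContinuousOn f S) {M : Set (Euc d)} (hM : MeasurableSet M) :
    MeasurableSet (S ∩ f ⁻¹' M) := by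
  have h1 : S ∩ f ⁻¹' M = Subtype.val '' (S.restrict f ⁻¹' M) := by
    ext x
    simp only [Set.restrict, mem_inter_iff, mem_preimage, Set.mem_image]
    constructor
    · rintro ⟨hx, hfx⟩; exact ⟨⟨x, hx⟩, hfx, rfl⟩
    · rintro ⟨⟨a, ha⟩, hfa, rfl⟩; exact ⟨ha, hfa⟩
  rw [h1]
  exact MeasurableSet.subtype_image hS.measurableSet ((hf.restrict.measurable) hM)

open scoped Classical in
lemma measurable_piecewise' {S : Set (Euc d)} (hS : IsOpen S) {f : Euc d → Euc d}
    (hf : ContinuousOn f S) (c : Euc d) : Measurable (fun x => if x ∈ S then f x else c) := by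
  classical
  intro t ht
  have hset : (fun x => if x ∈ S then f x else c) ⁻¹' t =
      (S ∩ f ⁻¹' t) ∪ (Sᶜ ∩ (if c ∈ t then univ else ∅)) := by
    ext x; by_cases hx : x ∈ S <;> by_cases hc : c ∈ t <;> simp [hx, hc]
  rw [hset]
  refine (measurableSet_inter_preimage hS hf ht).union (hS.measurableSet.compl.inter ?_)
  split <;> simp

open scoped Classical in
lemma density_transfer {S S' : Set (Euc d)} (hS : IsOpen S) (hS' : IsOpen S')
    {h hinv : Euc d → Euc d} (hd : IsSmoothDiffeoOn h hinv S S')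
    (μ ν : Measure (Euc d)) (hμS : μ (univ \ S) = 0)
    (hνf : ∀ F : Set (Euc d), MeasurableSet F → ν F = μ (h ⁻¹' F ∩ S))
    {z : Euc d} (hz : z ∈ S) {q' : Euc d → ENNReal} (hq'm : Measurable q')
    (hq' : ν = volume.withDensity q') :
    ∃ q : Euc d → ENNReal, Measurable q ∧ μ = volume.withDensity q ∧
      (ContinuousAt q' (h z) → ContinuousAt q z) := by
  set f : Euc d → ENNReal := fun x => ENNReal.ofReal |(fderiv ℝ h x).det| * q' (h x) with hfdef
  refine ⟨S.indicator f, ?_, ?_, ?_⟩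
  · -- measurability
    have hcongr : S.indicator f =
        S.indicator (fun x => ENNReal.ofReal |(fderiv ℝ h x).det| *
          q' (if x ∈ S then h x else h z)) := by
      apply Set.indicator_congr
      intro x hx
      rw [hfdef]; simp [hx]
    rw [hcongr]
    have hJm : Measurable (fun x : Euc d => ENNReal.ofReal |(fderiv ℝ h x).det|) :=
      ENNReal.continuous_ofReal.measurable.comp (continuous_abs.measurable.comp
        (ContinuousLinearMap.continuous_det.measurable.comp (measurable_fderiv ℝ h)))
    exact (hJm.mul (hq'm.comp (measurable_piecewise' hS hd.smooth.continuousOn (h z)))).indicator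
      hS.measurableSet
  · -- μ = withDensity
    refine Measure.ext fun E hE => ?_
    have hsE : MeasurableSet (S ∩ E) := hS.measurableSet.inter hE
    have hf' : ∀ x ∈ S ∩ E, HasFDerivWithinAt h (fderiv ℝ h x) (S ∩ E) x :=
      fun x hx => (hd.hasFDerivAt hS hx.1).hasFDerivWithinAt
    have hinj : InjOn h (S ∩ E) := hd.injOn.mono inter_subset_left
    have himg : MeasurableSet (h '' (S ∩ E)) := measurable_image_of_fderivWithin hsE hf' hinj
    have hcov := lintegral_image_eq_lintegral_abs_det_fderiv_mul volume hsE hf' hinj q'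
    have hpre : h ⁻¹' (h '' (S ∩ E)) ∩ S = S ∩ E := by
      ext x
      constructor
      · rintro ⟨hpre, hxS⟩
        obtain ⟨x', hx', hxx⟩ := hpre
        rwa [← hd.injOn hx'.1 hxS hxx]
      · intro hx
        exact ⟨mem_image_of_mem h hx, hx.1⟩
    have hES : μ E = μ (S ∩ E) := by
      have h0 : μ (E \ S) = 0 :=
        measure_mono_null (fun x (hx : x ∈ E \ S) => (⟨trivial, hx.2⟩ : x ∈ univ \ S)) hμS
      have := measure_inter_add_diff (μ := μ) E hS.measurableSet
      rw [inter_comm] at this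
      rw [← this, h0, add_zero]
    calc μ E = μ (S ∩ E) := hES
      _ = μ (h ⁻¹' (h '' (S ∩ E)) ∩ S) := by rw [hpre]
      _ = ν (h '' (S ∩ E)) := (hνf _ himg).symm
      _ = ∫⁻ y in h '' (S ∩ E), q' y := by rw [hq', withDensity_apply q' himg]
      _ = ∫⁻ x in S ∩ E, ENNReal.ofReal |(fderiv ℝ h x).det| * q' (h x) := hcov
      _ = ∫⁻ x in S, f x ∂(volume.restrict E) := by
          rw [Measure.restrict_restrict hS.measurableSet, hfdef]
      _ = ∫⁻ x in E, S.indicator f x := (lintegral_indicator hS.measurableSet f).symm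
      _ = volume.withDensity (S.indicator f) E := (withDensity_apply _ hE).symm
  · -- continuity
    intro hcont
    have hev : S.indicator f =ᶠ[𝓝 z] f := by
      filter_upwards [hS.mem_nhds hz] with y hy using Set.indicator_of_mem hy f
    have hJc : ContinuousAt (fun x : Euc d => ENNReal.ofReal |(fderiv ℝ h x).det|) z := by
      have hfd : ContinuousAt (fderiv ℝ h) z :=
        (hd.smooth.continuousOn_fderiv_of_isOpen hS (by exact_mod_cast le_top)).continuousAt
          (hS.mem_nhds hz)
      exact ENNReal.continuous_ofReal.continuousAt.comp
        (continuous_abs.continuousAt.comp (ContinuousLinearMap.continuous_det.continuousAt.comp hfd))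
    have hq'h : ContinuousAt (fun x => q' (h x)) z :=
      hcont.comp (hd.smooth.continuousOn.continuousAt (hS.mem_nhds hz))
    have hJ0 : ENNReal.ofReal |(fderiv ℝ h z).det| ≠ 0 := by
      simp only [ne_eq, ENNReal.ofReal_eq_zero, not_le]
      exact abs_pos.2 (hd.det_ne_zero hS hS' hz)
    have hJtop : ENNReal.ofReal |(fderiv ℝ h z).det| ≠ ⊤ := ENNReal.ofReal_ne_top
    have hfc : ContinuousAt f z := ENNReal.Tendsto.mul hJc (Or.inl hJ0) hq'h (Or.inr hJtop)
    exact hfc.congr hev.symm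

lemma nrd_transfer {S S' : Set (Euc d)} (hS : IsOpen S) (hS' : IsOpen S')
    {h hinv : Euc d → Euc d} (hd : IsSmoothDiffeoOn h hinv S S')
    (μ ν : Measure (Euc d)) (hμS : μ (univ \ S) = 0)
    (hνf : ∀ F : Set (Euc d), MeasurableSet F → ν F = μ (h ⁻¹' F ∩ S))
    {z : Euc d} (hz : z ∈ S) :
    HasNonRemovableDiscont μ z → HasNonRemovableDiscont ν (h z) := by
  intro hnrd q' hq'm hq' hcont
  obtain ⟨q, hqm, hqd, hqc⟩ := density_transfer hS hS' hd μ ν hμS hνf hz hq'm hq'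
  exact hnrd q hqm hqd (hqc hcont)

end MeasureTransfer


section LTwo

variable {d : ℕ}

def Vsub (i : Fin d) : Submodule ℝ (Euc d) :=
  LinearMap.ker ((EuclideanSpace.proj i : Euc d →L[ℝ] ℝ) : Euc d →ₗ[ℝ] ℝ)

lemma Vsub_mem {i : Fin d} {v : Euc d} : v ∈ Vsub i ↔ v i = 0 := by
  constructor
  · intro hv; exact hv
  · intro hv; exact hv

def uMap (i : Fin d) (τ : ℝ) (v : Vsub i) : Euc d :=
  (v : Euc d) + τ • EuclideanSpace.single i (1:ℝ)

def wMap (i : Fin d) (x : Euc d) : Vsub i :=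
  ⟨x - (x i) • EuclideanSpace.single i (1:ℝ), by
    rw [Vsub_mem]
    simp [EuclideanSpace.single_apply]⟩

lemma uMap_coord_self (i : Fin d) (τ : ℝ) (v : Vsub i) : uMap i τ v i = τ := by
  have hv : (v : Euc d) i = 0 := Vsub_mem.1 v.2
  simp [uMap, hv, EuclideanSpace.single_apply]

lemma uMap_coord (i : Fin d) (τ : ℝ) (v : Vsub i) (j : Fin d) (hj : j ≠ i) :
    uMap i τ v j = (v : Euc d) j := by
  simp [uMap, EuclideanSpace.single_apply, hj]

lemma uMap_wMap (i : Fin d) (τ : ℝ) {x : Euc d} (hx : x i = τ) : uMap i τ (wMap i x) = x := by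
  simp [uMap, wMap, hx]

lemma wMap_uMap (i : Fin d) (τ : ℝ) (v : Vsub i) : wMap i (uMap i τ v) = v := by
  apply Subtype.ext
  show uMap i τ v - (uMap i τ v i) • EuclideanSpace.single i (1:ℝ) = v
  rw [uMap_coord_self]
  simp [uMap]

lemma continuous_uMap (i : Fin d) (τ : ℝ) : Continuous (uMap i τ) :=
  continuous_subtype_val.add continuous_const

lemma continuous_wMap (i : Fin d) : Continuous (wMap i) :=
  (continuous_id.sub ((continuous_coord i).smul continuous_const)).subtype_mk _

variable {S S' : Set (Euc d)} {h hinv : Euc d → Euc d}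

def psiF (i : Fin d) (τ : ℝ) (h : Euc d → Euc d) (j : Fin d) (v : Vsub i) : ℝ :=
  h (uMap i τ v) j

def DpsiF (i : Fin d) (τ : ℝ) (h : Euc d → Euc d) (j : Fin d) (v : Vsub i) :
    (Vsub i) →L[ℝ] ℝ :=
  ((EuclideanSpace.proj j : Euc d →L[ℝ] ℝ).comp
    ((fderiv ℝ h (uMap i τ v)).comp (Vsub i).subtypeL))

lemma hasFDerivAt_psiF (hS : IsOpen S) (hd : IsSmoothDiffeoOn h hinv S S')
    {i : Fin d} {τ : ℝ} {v : Vsub i} (hv : uMap i τ v ∈ S) (j : Fin d) :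
    HasFDerivAt (psiF i τ h j) (DpsiF i τ h j v) v := by
  have hu : HasFDerivAt (uMap i τ) ((Vsub i).subtypeL) v :=
    ((Vsub i).subtypeL.hasFDerivAt).add_const _
  have hh : HasFDerivAt h (fderiv ℝ h (uMap i τ v)) (uMap i τ v) := hd.hasFDerivAt hS hv
  have hcomp := hh.comp v hu
  exact ((EuclideanSpace.proj j : Euc d →L[ℝ] ℝ).hasFDerivAt.comp v hcomp)

lemma continuousOn_psiF (hd : IsSmoothDiffeoOn h hinv S S') (i : Fin d) (τ : ℝ) (j : Fin d) :
    ContinuousOn (psiF i τ h j) ((uMap i τ) ⁻¹' S) := by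
  have : ContinuousOn (h ∘ (uMap i τ)) ((uMap i τ) ⁻¹' S) :=
    hd.smooth.continuousOn.comp (continuous_uMap i τ).continuousOn (fun v hv => hv)
  exact (continuous_coord j).comp_continuousOn this

lemma continuousOn_DpsiF (hS : IsOpen S) (hd : IsSmoothDiffeoOn h hinv S S')
    (i : Fin d) (τ : ℝ) (j : Fin d) :
    ContinuousOn (DpsiF i τ h j) ((uMap i τ) ⁻¹' S) := by
  have h1 : ContinuousOn (fun v : Vsub i => fderiv ℝ h (uMap i τ v)) ((uMap i τ) ⁻¹' S) :=
    (hd.smooth.continuousOn_fderiv_of_isOpen hS (by exact_mod_cast le_top)).comp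
      (continuous_uMap i τ).continuousOn (fun v hv => hv)
  have h2 : ContinuousOn (fun v : Vsub i => (fderiv ℝ h (uMap i τ v)).comp (Vsub i).subtypeL)
      ((uMap i τ) ⁻¹' S) := h1.clm_comp continuousOn_const
  exact continuousOn_const.clm_comp h2

lemma DpsiF_eq_zero_of_locally_const (hS : IsOpen S) (hd : IsSmoothDiffeoOn h hinv S S')
    {i : Fin d} {τ : ℝ} {v : Vsub i} (hv : uMap i τ v ∈ S) {j : Fin d} {c : ℝ}
    (hloc : ∀ᶠ w in 𝓝 v, psiF i τ h j w = c) : DpsiF i τ h j v = 0 := by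
  have h1 : HasFDerivAt (psiF i τ h j) (DpsiF i τ h j v) v := hasFDerivAt_psiF hS hd hv j
  have h2 : HasFDerivAt (psiF i τ h j) (0 : (Vsub i) →L[ℝ] ℝ) v :=
    (hasFDerivAt_const c v).congr_of_eventuallyEq hloc
  exact h1.unique h2

lemma DpsiF_unique (hS : IsOpen S) (hS' : IsOpen S') (hd : IsSmoothDiffeoOn h hinv S S')
    {i : Fin d} {τ : ℝ} {v : Vsub i} (hv : uMap i τ v ∈ S) {j1 j2 : Fin d}
    (h1 : DpsiF i τ h j1 v = 0) (h2 : DpsiF i τ h j2 v = 0) : j1 = j2 := by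
  apply hd.row_unique hS hS' hv (i := i)
  · intro w hw
    have := congrArg (fun L : (Vsub i) →L[ℝ] ℝ => L ⟨w, Vsub_mem.2 hw⟩) h1
    simpa [DpsiF] using this
  · intro w hw
    have := congrArg (fun L : (Vsub i) →L[ℝ] ℝ => L ⟨w, Vsub_mem.2 hw⟩) h2
    simpa [DpsiF] using this

lemma baire_aux {X : Type*} [TopologicalSpace X] [BaireSpace X] {ι : Type*} [Finite ι]
    {U : Set X} (hUo : IsOpen U) (C : ι → Set X) (hC : ∀ m, IsClosed (C m))
    (hCi : ∀ m, interior (C m) = ∅) (hsub : U ⊆ ⋃ m, C m) : U = ∅ := by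
  by_contra hne
  rw [← Ne, ← nonempty_iff_ne_empty] at hne
  have : Countable ι := Finite.to_countable
  set f : Option ι → Set X := fun o => Option.rec Uᶜ C o with hf
  have hfc : ∀ o, IsClosed (f o) := by
    rintro (_ | m)
    · exact hUo.isClosed_compl
    · exact hC m
  have hfu : (⋃ o, f o) = univ := by
    apply eq_univ_of_forall
    intro x
    by_cases hx : x ∈ U
    · obtain ⟨m, hm⟩ := mem_iUnion.1 (hsub hx)
      exact mem_iUnion.2 ⟨some m, hm⟩
    · exact mem_iUnion.2 ⟨none, hx⟩
  have hdense := dense_iUnion_interior_of_closed hfc hfu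
  obtain ⟨x, hx1, hx2⟩ := hdense.exists_mem_open hUo hne
  obtain ⟨o, ho⟩ := mem_iUnion.1 hx1
  match o with
  | none => exact (interior_subset ho) hx2
  | some m => rw [hCi m] at ho; exact ho

end LTwo

section LTwoMain

variable {d : ℕ} {S S' : Set (Euc d)} {h hinv : Euc d → Euc d}

lemma locConst (hS : IsOpen S) (hS' : IsOpen S') (hd : IsSmoothDiffeoOn h hinv S S')
    (CB : DiscreteCoordination S') {i : Fin d} {τ : ℝ}
    (hgrid : ∀ z ∈ Gamma S i τ, h z ∈ CB.grid)
    {p : Vsub i} (hp : uMap i τ p ∈ S) :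
    ∃ (j : Fin d) (k' : Fin (CB.n j)) (r : ℝ), 0 < r ∧
      Metric.ball p r ⊆ (uMap i τ) ⁻¹' S ∧
      ∀ v ∈ Metric.ball p r, psiF i τ h j v = CB.A j k' := by
  classical
  set O : Set (Vsub i) := (uMap i τ) ⁻¹' S with hO
  have hOopen : IsOpen O := hS.preimage (continuous_uMap i τ)
  have hpO : p ∈ O := hp
  -- membership in the grid gives an active constraint at every point of O
  have hact : ∀ v ∈ O, ∃ m : Σ j : Fin d, Fin (CB.n j), psiF i τ h m.1 v = CB.A m.1 m.2 := by
    intro v hv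
    have hvg : uMap i τ v ∈ Gamma S i τ := ⟨hv, uMap_coord_self i τ v⟩
    have := hgrid _ hvg
    rw [DiscreteCoordination.grid] at this
    obtain ⟨j, hj⟩ := mem_iUnion.1 this
    obtain ⟨k', hk'⟩ := mem_iUnion.1 hj
    exact ⟨⟨j, k'⟩, hk'.2⟩
  -- eventual facts near p
  have hEa : ∀ᶠ v in 𝓝 p, ∀ m : Σ j : Fin d, Fin (CB.n j),
      psiF i τ h m.1 p ≠ CB.A m.1 m.2 → psiF i τ h m.1 v ≠ CB.A m.1 m.2 := by
    rw [Filter.eventually_all]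
    intro m
    by_cases hm : psiF i τ h m.1 p = CB.A m.1 m.2
    · filter_upwards with v hv; exact absurd hm hv
    · have hc : ContinuousAt (psiF i τ h m.1) p :=
        (continuousOn_psiF hd i τ m.1).continuousAt (hOopen.mem_nhds hpO)
      filter_upwards [hc.eventually_ne hm] with v hv _ using hv
  have hEb : ∀ᶠ v in 𝓝 p, ∀ j : Fin d,
      DpsiF i τ h j p ≠ 0 → DpsiF i τ h j v ≠ 0 := by
    rw [Filter.eventually_all]
    intro j
    by_cases hj : DpsiF i τ h j p = 0
    · filter_upwards with v hv; exact absurd hj hv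
    · have hc : ContinuousAt (DpsiF i τ h j) p :=
        (continuousOn_DpsiF hS hd i τ j).continuousAt (hOopen.mem_nhds hpO)
      filter_upwards [hc.eventually_ne hj] with v hv _ using hv
  have hEc : O ∈ 𝓝 p := hOopen.mem_nhds hpO
  obtain ⟨r, hr, hball⟩ := Metric.nhds_basis_closedBall.mem_iff.1
    (Filter.inter_mem (Filter.inter_mem hEa hEb) hEc)
  have hcbO : Metric.closedBall p r ⊆ O := fun v hv => (hball hv).2
  have hcbA : ∀ v ∈ Metric.closedBall p r, ∀ m : Σ j : Fin d, Fin (CB.n j),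
      psiF i τ h m.1 p ≠ CB.A m.1 m.2 → psiF i τ h m.1 v ≠ CB.A m.1 m.2 :=
    fun v hv => (hball hv).1.1
  have hcbB : ∀ v ∈ Metric.closedBall p r, ∀ j : Fin d,
      DpsiF i τ h j p ≠ 0 → DpsiF i τ h j v ≠ 0 :=
    fun v hv => (hball hv).1.2
  -- covering by active constraint sets
  have hcover : ∀ v ∈ Metric.closedBall p r, ∃ m : Σ j : Fin d, Fin (CB.n j),
      psiF i τ h m.1 v = CB.A m.1 m.2 ∧ psiF i τ h m.1 p = CB.A m.1 m.2 := by
    intro v hv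
    obtain ⟨m, hm⟩ := hact v (hcbO hv)
    refine ⟨m, hm, ?_⟩
    by_contra hne
    exact hcbA v hv m hne hm
  set Z : (Σ j : Fin d, Fin (CB.n j)) → Set (Vsub i) := fun m =>
    Metric.closedBall p r ∩ (psiF i τ h m.1) ⁻¹' {CB.A m.1 m.2} with hZ
  have hZclosed : ∀ m, IsClosed (Z m) := by
    intro m
    exact ((continuousOn_psiF hd i τ m.1).mono hcbO).preimage_isClosed_of_isClosed
      Metric.isClosed_closedBall isClosed_singleton
  have hZint : ∀ m : Σ j : Fin d, Fin (CB.n j), DpsiF i τ h m.1 p ≠ 0 →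
      interior (Z m) = ∅ := by
    intro m hm
    rw [eq_empty_iff_forall_notMem]
    intro v hv
    have hvcb : v ∈ Metric.closedBall p r := interior_subset hv |>.1
    have hvO : uMap i τ v ∈ S := hcbO hvcb
    have hev : ∀ᶠ w in 𝓝 v, psiF i τ h m.1 w = CB.A m.1 m.2 := by
      filter_upwards [isOpen_interior.mem_nhds hv] with w hw
      exact (interior_subset hw).2
    exact hcbB v hvcb m.1 hm (DpsiF_eq_zero_of_locally_const hS hd hvO hev)
  -- the set of degenerate active constraints at p
  set Dact : Set (Σ j : Fin d, Fin (CB.n j)) :=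
    {m | psiF i τ h m.1 p = CB.A m.1 m.2 ∧ DpsiF i τ h m.1 p = 0} with hDact
  have hDsub : ∀ m ∈ Dact, ∀ m' ∈ Dact, m = m' := by
    rintro ⟨j1, k1⟩ ⟨ha1, hb1⟩ ⟨j2, k2⟩ ⟨ha2, hb2⟩
    have hj : j1 = j2 := DpsiF_unique hS hS' hd hp hb1 hb2
    subst hj
    have hk : k1 = k2 := by
      apply (CB.mono j1).injective
      rw [← ha1, ← ha2]
    rw [hk]
  -- Baire: the ball is covered by the degenerate sets
  have hDactcl : IsClosed (⋃ m ∈ Dact, Z m) :=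
    Set.Finite.isClosed_biUnion (Set.toFinite Dact) (fun m _ => hZclosed m)
  have hU : Metric.ball p r \ (⋃ m ∈ Dact, Z m) = ∅ := by
    refine baire_aux (ι := {m : Σ j : Fin d, Fin (CB.n j) // DpsiF i τ h m.1 p ≠ 0})
      (Metric.isOpen_ball.sdiff hDactcl) (fun m => Z m.1) (fun m => hZclosed m.1)
      (fun m => hZint m.1 m.2) ?_
    rintro v ⟨hvb, hvn⟩
    obtain ⟨m, hm1, hm2⟩ := hcover v (Metric.ball_subset_closedBall hvb)
    have hmd : DpsiF i τ h m.1 p ≠ 0 := by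
      intro h0
      exact hvn (mem_iUnion₂.2 ⟨m, ⟨hm2, h0⟩, ⟨Metric.ball_subset_closedBall hvb, hm1⟩⟩)
    exact mem_iUnion.2 ⟨⟨m, hmd⟩, ⟨Metric.ball_subset_closedBall hvb, hm1⟩⟩
  have hp_ball : p ∈ Metric.ball p r := Metric.mem_ball_self hr
  have hp_mem : p ∈ ⋃ m ∈ Dact, Z m := by
    by_contra hpn
    have : p ∈ Metric.ball p r \ (⋃ m ∈ Dact, Z m) := ⟨hp_ball, hpn⟩
    rw [hU] at this
    exact this
  obtain ⟨m0, hm0D, hpZ⟩ := mem_iUnion₂.1 hp_mem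
  refine ⟨m0.1, m0.2, r, hr, Metric.ball_subset_closedBall.trans hcbO, ?_⟩
  intro v hv
  have hvm : v ∈ ⋃ m ∈ Dact, Z m := by
    by_contra hvn
    have : v ∈ Metric.ball p r \ (⋃ m ∈ Dact, Z m) := ⟨hv, hvn⟩
    rw [hU] at this
    exact this
  obtain ⟨m, hmD, hvZ⟩ := mem_iUnion₂.1 hvm
  have hmm : m = m0 := hDsub m hmD m0 hm0D
  subst hmm
  exact hvZ.2

end LTwoMain

section GlobalConst

variable {d : ℕ} {S S' : Set (Euc d)} {h hinv : Euc d → Euc d}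

lemma exists_const_coord (hS : IsOpen S) (hS' : IsOpen S') (hd : IsSmoothDiffeoOn h hinv S S')
    (CB : DiscreteCoordination S') {i : Fin d} {τ : ℝ}
    (hconn : IsConnected (Gamma S i τ))
    (hgrid : ∀ z ∈ Gamma S i τ, h z ∈ CB.grid) :
    ∃ (j : Fin d) (k' : Fin (CB.n j)), ∀ z ∈ Gamma S i τ, h z j = CB.A j k' := by
  classical
  set O : Set (Vsub i) := (uMap i τ) ⁻¹' S with hO
  have hOopen : IsOpen O := hS.preimage (continuous_uMap i τ)
  -- O is connected: it is the image of the connected set Γ under wMap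
  have hOeq : O = wMap i '' (Gamma S i τ) := by
    ext v
    constructor
    · intro hv
      exact ⟨uMap i τ v, ⟨hv, uMap_coord_self i τ v⟩, wMap_uMap i τ v⟩
    · rintro ⟨z, hz, rfl⟩
      show uMap i τ (wMap i z) ∈ S
      rw [uMap_wMap i τ hz.2]
      exact hz.1
  have hOconn : IsConnected O := by
    rw [hOeq]
    exact hconn.image (wMap i) (continuous_wMap i).continuousOn
  -- base point
  obtain ⟨z0, hz0⟩ := hconn.nonempty
  have hp0 : wMap i z0 ∈ O := by
    show uMap i τ (wMap i z0) ∈ S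
    rw [uMap_wMap i τ hz0.2]
    exact hz0.1
  obtain ⟨j0, k0, r0, hr0, hb0O, hb0⟩ := locConst hS hS' hd CB hgrid hp0
  set c0 : ℝ := CB.A j0 k0 with hc0
  set T : Set (Vsub i) := {v | v ∈ O ∧ ∀ᶠ w in 𝓝 v, psiF i τ h j0 w = c0} with hT
  have hTopen : IsOpen T :=
    hOopen.inter (isOpen_setOf_eventually_nhds (p := fun w => psiF i τ h j0 w = c0))
  have hTp0 : wMap i z0 ∈ T := by
    refine ⟨hp0, ?_⟩
    filter_upwards [Metric.ball_mem_nhds _ hr0] with w hw using hb0 w hw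
  have hTclosed : O ∩ closure T ⊆ T := by
    rintro v ⟨hvO, hvc⟩
    obtain ⟨j, k', r, hr, hbO, hb⟩ := locConst hS hS' hd CB hgrid hvO
    obtain ⟨t, htT, htb⟩ : ∃ t, t ∈ T ∧ t ∈ Metric.ball v r := by
      have := (_root_.mem_closure_iff.1 hvc) (Metric.ball v r) Metric.isOpen_ball
        (Metric.mem_ball_self hr)
      obtain ⟨t, ht1, ht2⟩ := this
      exact ⟨t, ht2, ht1⟩
    have htO : uMap i τ t ∈ S := hbO htb
    have hev1 : ∀ᶠ w in 𝓝 t, psiF i τ h j0 w = c0 := htT.2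
    have hev2 : ∀ᶠ w in 𝓝 t, psiF i τ h j w = CB.A j k' := by
      filter_upwards [Metric.isOpen_ball.mem_nhds htb] with w hw using hb w hw
    have hD1 : DpsiF i τ h j0 t = 0 := DpsiF_eq_zero_of_locally_const hS hd htO hev1
    have hD2 : DpsiF i τ h j t = 0 := DpsiF_eq_zero_of_locally_const hS hd htO hev2
    have hjj : j = j0 := DpsiF_unique hS hS' hd htO hD2 hD1
    subst hjj
    have hcc : CB.A j k' = c0 := by
      have e1 : psiF i τ h j t = CB.A j k' := hb t htb
      have e2 : psiF i τ h j t = c0 := hev1.self_of_nhds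
      rw [← e1, e2]
    refine ⟨hvO, ?_⟩
    filter_upwards [Metric.ball_mem_nhds _ hr] with w hw
    rw [← hcc]
    exact hb w hw
  have hTO : O ⊆ T := by
    have hsub : O ⊆ T ∪ (O ∩ (closure T)ᶜ) := by
      intro v hv
      by_cases hvc : v ∈ closure T
      · exact Or.inl (hTclosed ⟨hv, hvc⟩)
      · exact Or.inr ⟨hv, hvc⟩
    have hdisj : Disjoint T (O ∩ (closure T)ᶜ) := by
      rw [Set.disjoint_left]
      intro v hvT hvR
      exact hvR.2 (subset_closure hvT)
    exact hOconn.isPreconnected.subset_left_of_subset_union hTopen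
      (hOopen.inter (isClosed_closure.isOpen_compl)) hdisj hsub ⟨wMap i z0, hp0, hTp0⟩
  refine ⟨j0, k0, ?_⟩
  intro z hz
  have hzO : wMap i z ∈ O := by
    show uMap i τ (wMap i z) ∈ S
    rw [uMap_wMap i τ hz.2]
    exact hz.1
  have := (hTO hzO).2.self_of_nhds
  rwa [psiF, uMap_wMap i τ hz.2] at this

end GlobalConst

section SepImage

variable {d : ℕ} {S S' : Set (Euc d)} {h hinv : Euc d → Euc d}

lemma gamma_subset_closure_pos (hS' : IsOpen S') (j : Fin d) (τ' : ℝ) :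
    Gamma S' j τ' ⊆ closure (GammaPos S' j τ') := by
  intro q hq
  rw [Metric.mem_closure_iff]
  intro ε hε
  obtain ⟨δ, hδ, hball⟩ := Metric.isOpen_iff.1 hS' q hq.1
  set a : ℝ := min (ε/2) (δ/2) with ha
  have ha0 : 0 < a := lt_min (half_pos hε) (half_pos hδ)
  refine ⟨q + a • EuclideanSpace.single j (1:ℝ), ⟨?_, ?_⟩, ?_⟩
  · apply hball
    have : dist (q + a • EuclideanSpace.single j (1:ℝ)) q = a := by
      simp [dist_eq_norm, norm_smul, EuclideanSpace.norm_single, abs_of_pos ha0]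
    simp only [Metric.mem_ball, this]
    calc a ≤ δ/2 := min_le_right _ _
      _ < δ := by linarith
  · have : (q + a • EuclideanSpace.single j (1:ℝ)) j = q j + a := by
      simp [EuclideanSpace.single_apply]
    rw [this, hq.2]
    linarith
  · have : dist q (q + a • EuclideanSpace.single j (1:ℝ)) = a := by
      simp [dist_eq_norm, norm_smul, EuclideanSpace.norm_single, abs_of_pos ha0]
    rw [this]
    calc a ≤ ε/2 := min_le_left _ _
      _ < ε := by linarith

lemma gamma_subset_closure_neg (hS' : IsOpen S') (j : Fin d) (τ' : ℝ) :
    Gamma S' j τ' ⊆ closure (GammaNeg S' j τ') := by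
  intro q hq
  rw [Metric.mem_closure_iff]
  intro ε hε
  obtain ⟨δ, hδ, hball⟩ := Metric.isOpen_iff.1 hS' q hq.1
  set a : ℝ := min (ε/2) (δ/2) with ha
  have ha0 : 0 < a := lt_min (half_pos hε) (half_pos hδ)
  refine ⟨q - a • EuclideanSpace.single j (1:ℝ), ⟨?_, ?_⟩, ?_⟩
  · apply hball
    have : dist (q - a • EuclideanSpace.single j (1:ℝ)) q = a := by
      simp [dist_eq_norm, norm_smul, EuclideanSpace.norm_single, abs_of_pos ha0]
    simp only [Metric.mem_ball, this]
    calc a ≤ δ/2 := min_le_right _ _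
      _ < δ := by linarith
  · have : (q - a • EuclideanSpace.single j (1:ℝ)) j = q j - a := by
      simp [EuclideanSpace.single_apply]
    rw [this, hq.2]
    linarith
  · have : dist q (q - a • EuclideanSpace.single j (1:ℝ)) = a := by
      simp [dist_eq_norm, norm_smul, EuclideanSpace.norm_single, abs_of_pos ha0]
    rw [this]
    calc a ≤ ε/2 := min_le_left _ _
      _ < ε := by linarith

lemma sep_image (hS : IsOpen S) (hS' : IsOpen S') (hd : IsSmoothDiffeoOn h hinv S S')
    (CB : DiscreteCoordination S') {i : Fin d} {τ : ℝ} (hsep : IsAxisSeparator S i τ)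
    (hgrid : ∀ z ∈ Gamma S i τ, h z ∈ CB.grid) :
    ∃ (j : Fin d) (k' : Fin (CB.n j)), h '' Gamma S i τ = Gamma S' j (CB.A j k') := by
  obtain ⟨j, k', hcoord⟩ := exists_const_coord hS hS' hd CB hsep.1 hgrid
  refine ⟨j, k', ?_⟩
  set τ' : ℝ := CB.A j k' with hτ'
  set C : Set (Euc d) := h '' Gamma S i τ with hC
  have hsub : C ⊆ Gamma S' j τ' := by
    rintro y ⟨z, hz, rfl⟩
    exact ⟨hd.mapsTo hz.1, hcoord z hz⟩
  refine subset_antisymm hsub ?_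
  by_contra hnsub
  obtain ⟨p, hpΓ', hpC⟩ := not_subset.1 hnsub
  -- image halves
  set U1 : Set (Euc d) := h '' GammaPos S i τ with hU1
  set U2 : Set (Euc d) := h '' GammaNeg S i τ with hU2
  have hU1o : IsOpen U1 := hd.isOpen_image hS' (isOpen_gammaPos hS i τ) (fun x hx => hx.1)
  have hU2o : IsOpen U2 := hd.isOpen_image hS' (isOpen_gammaNeg hS i τ) (fun x hx => hx.1)
  have hU1ne : U1.Nonempty := hsep.2.1.nonempty.image h
  have hU2ne : U2.Nonempty := hsep.2.2.nonempty.image h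
  have hU12 : Disjoint U1 U2 := by
    rw [Set.disjoint_left]
    rintro y ⟨x1, hx1, rfl⟩ ⟨x2, hx2, heq⟩
    have : x2 = x1 := hd.injOn hx2.1 hx1.1 heq
    subst this
    exact absurd hx1.2 (not_lt.2 (le_of_lt hx2.2))
  have hcover : S' \ C = U1 ∪ U2 := by
    ext y
    constructor
    · rintro ⟨hyS', hyC⟩
      have hxS : hinv y ∈ S := hd.mapsTo_inv hyS'
      have hxy : h (hinv y) = y := hd.right_inv y hyS'
      have hne : hinv y i ≠ τ := by
        intro heq
        exact hyC ⟨hinv y, ⟨hxS, heq⟩, hxy⟩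
      rcases lt_or_gt_of_ne hne with hlt | hgt
      · exact Or.inr ⟨hinv y, ⟨hxS, hlt⟩, hxy⟩
      · exact Or.inl ⟨hinv y, ⟨hxS, hgt⟩, hxy⟩
    · rintro (⟨x, hx, rfl⟩ | ⟨x, hx, rfl⟩)
      · refine ⟨hd.mapsTo hx.1, ?_⟩
        rintro ⟨z, hz, heq⟩
        have : z = x := hd.injOn hz.1 hx.1 heq
        subst this
        exact absurd hz.2 (ne_of_gt hx.2)
      · refine ⟨hd.mapsTo hx.1, ?_⟩
        rintro ⟨z, hz, heq⟩
        have : z = x := hd.injOn hz.1 hx.1 heq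
        subst this
        exact absurd hz.2 (ne_of_lt hx.2)
  -- grid halves on the target side
  set V1 : Set (Euc d) := GammaPos S' j τ' with hV1
  set V2 : Set (Euc d) := GammaNeg S' j τ' with hV2
  have hV1pre : IsPreconnected V1 := (CB.sep j k').2.1.isPreconnected
  have hV2pre : IsPreconnected V2 := (CB.sep j k').2.2.isPreconnected
  set X : Set (Euc d) := V1 ∪ (Gamma S' j τ' \ C) with hX
  set Y : Set (Euc d) := V2 ∪ (Gamma S' j τ' \ C) with hY
  have hXpre : IsPreconnected X :=
    hV1pre.subset_closure subset_union_left
      (union_subset subset_closure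
        ((diff_subset).trans (gamma_subset_closure_pos hS' j τ')))
  have hYpre : IsPreconnected Y :=
    hV2pre.subset_closure subset_union_left
      (union_subset subset_closure
        ((diff_subset).trans (gamma_subset_closure_neg hS' j τ')))
  have hXYpre : IsPreconnected (X ∪ Y) :=
    hXpre.union p (Or.inr ⟨hpΓ', hpC⟩) (Or.inr ⟨hpΓ', hpC⟩) hYpre
  have hSCeq : S' \ C = X ∪ Y := by
    ext y
    constructor
    · rintro ⟨hyS', hyC⟩
      rcases lt_trichotomy (y j) τ' with hlt | heq | hgt
      · exact Or.inr (Or.inl ⟨hyS', hlt⟩)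
      · exact Or.inl (Or.inr ⟨⟨hyS', heq⟩, hyC⟩)
      · exact Or.inl (Or.inl ⟨hyS', hgt⟩)
    · have hVC1 : V1 ⊆ S' \ C := by
        intro y hy
        refine ⟨hy.1, fun hyC => ?_⟩
        exact absurd (hsub hyC).2 (ne_of_gt hy.2)
      have hVC2 : V2 ⊆ S' \ C := by
        intro y hy
        refine ⟨hy.1, fun hyC => ?_⟩
        exact absurd (hsub hyC).2 (ne_of_lt hy.2)
      rintro (hy | hy)
      · rcases hy with hy | hy
        · exact hVC1 hy
        · exact ⟨hy.1.1, hy.2⟩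
      · rcases hy with hy | hy
        · exact hVC2 hy
        · exact ⟨hy.1.1, hy.2⟩
  have hpre : IsPreconnected (S' \ C) := by
    rw [hSCeq]
    exact hXYpre
  have hcontra := hpre U1 U2 hU1o hU2o (by rw [hcover]) ?_ ?_
  · obtain ⟨y, _, hy1, hy2⟩ := hcontra
    exact (Set.disjoint_left.1 hU12) hy1 hy2
  · obtain ⟨y, hy⟩ := hU1ne
    exact ⟨y, by rw [hcover]; exact Or.inl hy, hy⟩
  · obtain ⟨y, hy⟩ := hU2ne
    exact ⟨y, by rw [hcover]; exact Or.inr hy, hy⟩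

end SepImage

section Halves

variable {d : ℕ} {S S' : Set (Euc d)} {h hinv : Euc d → Euc d}

lemma image_halves_cover (hd : IsSmoothDiffeoOn h hinv S S') {i : Fin d} {τ : ℝ} :
    S' \ (h '' Gamma S i τ) = (h '' GammaPos S i τ) ∪ (h '' GammaNeg S i τ) := by
  ext y
  constructor
  · rintro ⟨hyS', hyC⟩
    have hxS : hinv y ∈ S := hd.mapsTo_inv hyS'
    have hxy : h (hinv y) = y := hd.right_inv y hyS'
    have hne : hinv y i ≠ τ := fun heq => hyC ⟨hinv y, ⟨hxS, heq⟩, hxy⟩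
    rcases lt_or_gt_of_ne hne with hlt | hgt
    · exact Or.inr ⟨hinv y, ⟨hxS, hlt⟩, hxy⟩
    · exact Or.inl ⟨hinv y, ⟨hxS, hgt⟩, hxy⟩
  · rintro (⟨x, hx, rfl⟩ | ⟨x, hx, rfl⟩)
    · refine ⟨hd.mapsTo hx.1, ?_⟩
      rintro ⟨z, hz, heq⟩
      have : z = x := hd.injOn hz.1 hx.1 heq
      subst this
      exact absurd hz.2 (ne_of_gt hx.2)
    · refine ⟨hd.mapsTo hx.1, ?_⟩
      rintro ⟨z, hz, heq⟩
      have : z = x := hd.injOn hz.1 hx.1 heq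
      subst this
      exact absurd hz.2 (ne_of_lt hx.2)

lemma halves_image (hS : IsOpen S) (hS' : IsOpen S') (hd : IsSmoothDiffeoOn h hinv S S')
    {i j : Fin d} {τ τ' : ℝ} (hsepA : IsAxisSeparator S i τ) (hsepB : IsAxisSeparator S' j τ')
    (himg : h '' Gamma S i τ = Gamma S' j τ') :
    (h '' GammaPos S i τ = GammaPos S' j τ' ∧ h '' GammaNeg S i τ = GammaNeg S' j τ') ∨
    (h '' GammaPos S i τ = GammaNeg S' j τ' ∧ h '' GammaNeg S i τ = GammaPos S' j τ') := by
  have hcov : S' \ Gamma S' j τ' = (h '' GammaPos S i τ) ∪ (h '' GammaNeg S i τ) := by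
    rw [← himg]
    exact image_halves_cover hd
  have hVcov : S' \ Gamma S' j τ' = GammaPos S' j τ' ∪ GammaNeg S' j τ' := by
    ext y
    constructor
    · rintro ⟨hyS', hyΓ⟩
      have : y j ≠ τ' := fun heq => hyΓ ⟨hyS', heq⟩
      rcases lt_or_gt_of_ne this with hlt | hgt
      · exact Or.inr ⟨hyS', hlt⟩
      · exact Or.inl ⟨hyS', hgt⟩
    · rintro (hy | hy)
      · exact ⟨hy.1, fun hmem => absurd hmem.2 (ne_of_gt hy.2)⟩
      · exact ⟨hy.1, fun hmem => absurd hmem.2 (ne_of_lt hy.2)⟩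
  have hVdisj : Disjoint (GammaPos S' j τ') (GammaNeg S' j τ') := by
    rw [Set.disjoint_left]
    rintro y hy1 hy2
    exact absurd hy2.2 (not_lt.2 (le_of_lt hy1.2))
  have hU1pre : IsPreconnected (h '' GammaPos S i τ) :=
    (hsepA.2.1.image h (hd.smooth.continuousOn.mono (fun x hx => hx.1))).isPreconnected
  have hU2pre : IsPreconnected (h '' GammaNeg S i τ) :=
    (hsepA.2.2.image h (hd.smooth.continuousOn.mono (fun x hx => hx.1))).isPreconnected
  have hV1o : IsOpen (GammaPos S' j τ') := isOpen_gammaPos hS' j τ'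
  have hV2o : IsOpen (GammaNeg S' j τ') := isOpen_gammaNeg hS' j τ'
  have hU1sub : h '' GammaPos S i τ ⊆ GammaPos S' j τ' ∪ GammaNeg S' j τ' := by
    rw [← hVcov, hcov]; exact subset_union_left
  have hU2sub : h '' GammaNeg S i τ ⊆ GammaPos S' j τ' ∪ GammaNeg S' j τ' := by
    rw [← hVcov, hcov]; exact subset_union_right
  have hc1 := hU1pre.subset_or_subset hV1o hV2o hVdisj hU1sub
  have hc2 := hU2pre.subset_or_subset hV1o hV2o hVdisj hU2sub
  -- exactness helper
  have hexact : ∀ {U W V : Set (Euc d)}, U ∪ W = GammaPos S' j τ' ∪ GammaNeg S' j τ' →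
      U ⊆ V → W ⊆ Vᶜ → V ⊆ GammaPos S' j τ' ∪ GammaNeg S' j τ' → U = V := by
    intro U W V hUW hUV hWV hVsub
    refine subset_antisymm hUV ?_
    intro y hy
    have : y ∈ U ∪ W := by rw [hUW]; exact hVsub hy
    rcases this with hyU | hyW
    · exact hyU
    · exact absurd hy (hWV hyW)
  have huv : (h '' GammaPos S i τ) ∪ (h '' GammaNeg S i τ)
      = GammaPos S' j τ' ∪ GammaNeg S' j τ' := by rw [← hcov, hVcov]
  rcases hc1 with h1 | h1 <;> rcases hc2 with h2 | h2
  · -- both in V1 : contradiction, V2 would be empty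
    exfalso
    obtain ⟨y, hy⟩ := hsepB.2.2.nonempty
    have : y ∈ (h '' GammaPos S i τ) ∪ (h '' GammaNeg S i τ) := by
      rw [huv]; exact Or.inr hy
    rcases this with hyU | hyU
    · exact (Set.disjoint_left.1 hVdisj) (h1 hyU) hy
    · exact (Set.disjoint_left.1 hVdisj) (h2 hyU) hy
  · left
    constructor
    · exact hexact huv h1 (fun y hy => Set.disjoint_right.1 hVdisj (h2 hy)) subset_union_left
    · exact hexact (union_comm _ _ ▸ huv) h2
        (fun y hy => Set.disjoint_left.1 hVdisj (h1 hy)) subset_union_right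
  · right
    constructor
    · exact hexact huv h1 (fun y hy => Set.disjoint_left.1 hVdisj (h2 hy)) subset_union_right
    · exact hexact (union_comm _ _ ▸ huv) h2
        (fun y hy => Set.disjoint_right.1 hVdisj (h1 hy)) subset_union_left
  · -- both in V2 : contradiction, V1 would be empty
    exfalso
    obtain ⟨y, hy⟩ := hsepB.2.1.nonempty
    have : y ∈ (h '' GammaPos S i τ) ∪ (h '' GammaNeg S i τ) := by
      rw [huv]; exact Or.inl hy
    rcases this with hyU | hyU
    · exact (Set.disjoint_left.1 hVdisj) hy (h1 hyU)
    · exact (Set.disjoint_left.1 hVdisj) hy (h2 hyU)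

end Halves


namespace IsSmoothDiffeoOn
variable {d : ℕ} {h hinv : Euc d → Euc d} {S S' : Set (Euc d)}
lemma image_cancel (hd : IsSmoothDiffeoOn h hinv S S') {A B : Set (Euc d)}
    (hA : A ⊆ S) (hB : B ⊆ S) (he : h '' A = h '' B) : A = B := by
  rw [← hd.image_image_inv hA, he, hd.image_image_inv hB]
end IsSmoothDiffeoOn


/-- **Quantized factors identifiability theorem.** -/
theorem quantized_factors_identifiability
    {d : ℕ} {S S' : Set (Euc d)} (hS : IsOpen S) (hSc : IsConnected S) (hS' : IsOpen S')
    (μ : Measure (Euc d)) [IsProbabilityMeasure μ] (hac : μ ≪ volume)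
    (hμS : μ (Set.univ \ S) = 0)
    (CA : DiscreteCoordination S) (hbb : CA.HasBackbone)
    (hdiscA : {z | z ∈ S ∧ HasNonRemovableDiscont μ z} = CA.grid)
    {h hinv : Euc d → Euc d} (hdiff : IsSmoothDiffeoOn h hinv S S')
    (ν : Measure (Euc d)) (hν : ν = Measure.map h (μ.restrict S))
    (CB : DiscreteCoordination S')
    (hdiscB : {z' | z' ∈ S' ∧ HasNonRemovableDiscont ν z'} = CB.grid) :
    ∃ (σ : Equiv.Perm (Fin d)) (s : Fin d → ℤ),
      (∀ i, s i = 1 ∨ s i = -1) ∧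
      ∀ i : Fin d, ∀ z ∈ S, Q (z i) (CA.A i) = Qsgn (s i) (h z (σ i)) (CB.A (σ i)) := by
  classical
  -- measure plumbing
  have hνf : ∀ F : Set (Euc d), MeasurableSet F → ν F = μ (h ⁻¹' F ∩ S) := by
    intro F hF
    rw [hν, Measure.map_apply_of_aemeasurable
      (hdiff.smooth.continuousOn.aemeasurable hS.measurableSet) hF,
      Measure.restrict_apply' hS.measurableSet]
  have hνS' : ν (univ \ S') = 0 := by
    rw [hνf _ (MeasurableSet.univ.diff hS'.measurableSet)]
    have hempty : h ⁻¹' (univ \ S') ∩ S = ∅ := by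
      ext x
      simp only [mem_inter_iff, mem_preimage, mem_diff, mem_univ, true_and,
        mem_empty_iff_false, iff_false, not_and]
      intro hns' hxS
      exact hns' (hdiff.mapsTo hxS)
    rw [hempty, measure_empty]
  have hμf : ∀ F : Set (Euc d), MeasurableSet F → μ F = ν (hinv ⁻¹' F ∩ S') := by
    intro F hF
    have hmeas : MeasurableSet (hinv ⁻¹' F ∩ S') := by
      rw [inter_comm]
      exact measurableSet_inter_preimage hS' hdiff.smooth_inv.continuousOn hF
    rw [hνf _ hmeas]
    have hseteq : h ⁻¹' (hinv ⁻¹' F ∩ S') ∩ S = F ∩ S := by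
      ext x
      simp only [mem_inter_iff, mem_preimage]
      constructor
      · rintro ⟨⟨hxF, _⟩, hxS⟩
        rw [hdiff.left_inv x hxS] at hxF
        exact ⟨hxF, hxS⟩
      · rintro ⟨hxF, hxS⟩
        exact ⟨⟨by rw [hdiff.left_inv x hxS]; exact hxF, hdiff.mapsTo hxS⟩, hxS⟩
    rw [hseteq]
    have h0 : μ (F \ S) = 0 :=
      measure_mono_null (fun x (hx : x ∈ F \ S) => (⟨trivial, hx.2⟩ : x ∈ univ \ S)) hμS
    have hiad := measure_inter_add_diff (μ := μ) F hS.measurableSet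
    rw [← hiad, h0, add_zero]
  -- non-removable discontinuity transfer
  have hnrd : ∀ z ∈ S, (HasNonRemovableDiscont μ z ↔ HasNonRemovableDiscont ν (h z)) := by
    intro z hz
    constructor
    · exact nrd_transfer hS hS' hdiff μ ν hμS hνf hz
    · intro hn
      have := nrd_transfer hS' hS hdiff.symm ν μ hνS' hμf (hdiff.mapsTo hz) hn
      rwa [hdiff.left_inv z hz] at this
  have hkey : ∀ z ∈ S, (z ∈ CA.grid ↔ h z ∈ CB.grid) := by
    intro z hz
    rw [← hdiscA, ← hdiscB]
    simp only [mem_setOf_eq]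
    constructor
    · rintro ⟨-, hn⟩
      exact ⟨hdiff.mapsTo hz, (hnrd z hz).1 hn⟩
    · rintro ⟨-, hn⟩
      exact ⟨hz, (hnrd z hz).2 hn⟩
  -- grid membership for separator points
  have hgridA : ∀ (i : Fin d) (k : Fin (CA.n i)), ∀ z ∈ Gamma S i (CA.A i k),
      h z ∈ CB.grid := by
    intro i k z hz
    exact (hkey z hz.1).1 (mem_iUnion.2 ⟨i, mem_iUnion.2 ⟨k, hz⟩⟩)
  have hgridB : ∀ (j : Fin d) (k' : Fin (CB.n j)), ∀ y ∈ Gamma S' j (CB.A j k'),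
      hinv y ∈ CA.grid := by
    intro j k' y hy
    have hyS : hinv y ∈ S := hdiff.mapsTo_inv hy.1
    have hmem : h (hinv y) ∈ CB.grid := by
      rw [hdiff.right_inv y hy.1]
      exact mem_iUnion.2 ⟨j, mem_iUnion.2 ⟨k', hy⟩⟩
    exact (hkey _ hyS).2 hmem
  -- separator images
  have hSEPa : ∀ (i : Fin d) (k : Fin (CA.n i)),
      ∃ (j : Fin d) (k' : Fin (CB.n j)), h '' Gamma S i (CA.A i k) = Gamma S' j (CB.A j k') :=
    fun i k => sep_image hS hS' hdiff CB (CA.sep i k) (hgridA i k)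
  choose J K hJK using hSEPa
  have hSEPb : ∀ (j : Fin d) (k' : Fin (CB.n j)),
      ∃ (i : Fin d) (k : Fin (CA.n i)),
        hinv '' Gamma S' j (CB.A j k') = Gamma S i (CA.A i k) :=
    fun j k' => sep_image hS' hS hdiff.symm CA (CB.sep j k') (hgridB j k')
  choose J' K' hJ'K' using hSEPb
  -- sigma-level index recovery
  have hidxA : ∀ {i i' : Fin d} {k : Fin (CA.n i)} {k' : Fin (CA.n i')},
      Gamma S i (CA.A i k) = Gamma S i' (CA.A i' k') →
      (⟨i, k⟩ : Σ x : Fin d, Fin (CA.n x)) = ⟨i', k'⟩ := by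
    intro i i' k k' he
    obtain ⟨hii, hAA⟩ := gamma_index hS (CA.sep i k).1.nonempty he
    subst hii
    have hkk : k = k' := (CA.mono i).injective hAA
    rw [hkk]
  have hidxB : ∀ {j j' : Fin d} {k : Fin (CB.n j)} {k' : Fin (CB.n j')},
      Gamma S' j (CB.A j k) = Gamma S' j' (CB.A j' k') →
      (⟨j, k⟩ : Σ x : Fin d, Fin (CB.n x)) = ⟨j', k'⟩ := by
    intro j j' k k' he
    obtain ⟨hjj, hBB⟩ := gamma_index hS' (CB.sep j k).1.nonempty he
    subst hjj
    have hkk : k = k' := (CB.mono j).injective hBB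
    rw [hkk]
  have hsubΓA : ∀ (i : Fin d) (k : Fin (CA.n i)), Gamma S i (CA.A i k) ⊆ S :=
    fun i k x hx => hx.1
  have hsubΓB : ∀ (j : Fin d) (k' : Fin (CB.n j)), Gamma S' j (CB.A j k') ⊆ S' :=
    fun j k' x hx => hx.1
  -- roundtrips
  have hrt1 : ∀ (i : Fin d) (k : Fin (CA.n i)),
      (⟨J' (J i k) (K i k), K' (J i k) (K i k)⟩ : Σ x : Fin d, Fin (CA.n x)) = ⟨i, k⟩ := by
    intro i k
    apply hidxA
    rw [← hJ'K', ← hJK, hdiff.image_image_inv (hsubΓA i k)]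
  have hrt2 : ∀ (j : Fin d) (k' : Fin (CB.n j)),
      (⟨J (J' j k') (K' j k'), K (J' j k') (K' j k')⟩ : Σ x : Fin d, Fin (CB.n x)) = ⟨j, k'⟩ := by
    intro j k'
    apply hidxB
    rw [← hJK, ← hJ'K', hdiff.symm.image_image_inv (hsubΓB j k')]
  -- backbone
  obtain ⟨kstar, ⟨z0, hz0⟩, hcross⟩ := hbb
  have hz0mem : ∀ i : Fin d, z0 ∈ Gamma S i (CA.A i (kstar i)) := by
    intro i
    have hz0' : z0 ∈ ⋂ (i : Fin d), Gamma S i (CA.A i (kstar i)) := by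
      rw [hz0]; exact rfl
    exact mem_iInter.1 hz0' i
  have hGammaEqB : ∀ {j j' : Fin d} {τ1 τ2 : ℝ}, j = j' → ∀ y : Euc d,
      y ∈ Gamma S' j τ1 → y ∈ Gamma S' j' τ2 → Gamma S' j τ1 = Gamma S' j' τ2 := by
    rintro j _ τ1 τ2 rfl y hy1 hy2
    have : τ1 = τ2 := by rw [← hy1.2, hy2.2]
    rw [this]
  have hinj : Function.Injective (fun i => J i (kstar i)) := by
    intro i i' he
    have h1 : h z0 ∈ Gamma S' (J i (kstar i)) (CB.A _ (K i (kstar i))) := by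
      rw [← hJK]; exact mem_image_of_mem h (hz0mem i)
    have h2 : h z0 ∈ Gamma S' (J i' (kstar i')) (CB.A _ (K i' (kstar i'))) := by
      rw [← hJK]; exact mem_image_of_mem h (hz0mem i')
    have hge := hGammaEqB he (h z0) h1 h2
    have hΓ : Gamma S i (CA.A i (kstar i)) = Gamma S i' (CA.A i' (kstar i')) :=
      hdiff.image_cancel (hsubΓA _ _) (hsubΓA _ _) (by rw [hJK, hJK, hge])
    exact congrArg Sigma.fst (hidxA hΓ)
  have hbij : Function.Bijective (fun i => J i (kstar i)) :=
    Finite.injective_iff_bijective.1 hinj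
  set σ0 : Fin d → Fin d := fun i => J i (kstar i) with hσ0
  have hJconst : ∀ (i : Fin d) (k : Fin (CA.n i)), J i k = σ0 i := by
    intro i k
    by_contra hne
    obtain ⟨m, hm⟩ := hbij.2 (J i k)
    have hm : J m (kstar m) = J i k := hm
    have hmi : i ≠ m := by
      intro e
      subst e
      exact hne hm.symm
    obtain ⟨z1, hz1a, hz1b⟩ := hcross m i hmi k
    have h1 : h z1 ∈ Gamma S' (J m (kstar m)) (CB.A _ (K m (kstar m))) := by
      rw [← hJK]; exact mem_image_of_mem h hz1a
    have h2 : h z1 ∈ Gamma S' (J i k) (CB.A _ (K i k)) := by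
      rw [← hJK]; exact mem_image_of_mem h hz1b
    have hge := hGammaEqB hm (h z1) h1 h2
    have hΓ : Gamma S m (CA.A m (kstar m)) = Gamma S i (CA.A i k) :=
      hdiff.image_cancel (hsubΓA _ _) (hsubΓA _ _) (by rw [hJK, hJK, hge])
    exact hmi (congrArg Sigma.fst (hidxA hΓ)).symm
  -- casts
  have castGamma : ∀ {j j' : Fin d} (e : j = j') (k : Fin (CB.n j)),
      Gamma S' j (CB.A j k) = Gamma S' j' (CB.A j' (Fin.cast (congrArg CB.n e) k)) := by
    rintro j _ rfl k; rfl
  set f : (i : Fin d) → Fin (CA.n i) → Fin (CB.n (σ0 i)) :=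
    fun i k => Fin.cast (congrArg CB.n (hJconst i k)) (K i k) with hfdef
  have hIMG : ∀ (i : Fin d) (k : Fin (CA.n i)),
      h '' Gamma S i (CA.A i k) = Gamma S' (σ0 i) (CB.A (σ0 i) (f i k)) := by
    intro i k
    rw [hJK i k, castGamma (hJconst i k) (K i k)]
  -- J' is constant too, on the image axis
  have hJ'const : ∀ (i : Fin d) (k' : Fin (CB.n (σ0 i))), J' (σ0 i) k' = i := by
    intro i k'
    have e1 := congrArg Sigma.fst (hrt2 (σ0 i) k')
    simp only at e1
    rw [hJconst] at e1
    exact hinj e1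
  set g : (i : Fin d) → Fin (CB.n (σ0 i)) → Fin (CA.n i) :=
    fun i k' => Fin.cast (congrArg CA.n (hJ'const i k')) (K' (σ0 i) k') with hgdef
  -- sigma second component extraction
  have sndA : ∀ {a a' : Fin d} {b : Fin (CA.n a)} {b' : Fin (CA.n a')},
      (⟨a, b⟩ : Σ x : Fin d, Fin (CA.n x)) = ⟨a', b'⟩ → ∀ (ha : a = a'),
      Fin.cast (congrArg CA.n ha) b = b' := by
    intro a a' b b' e ha
    subst ha
    injection e with e1 e2
  have sndB : ∀ {a a' : Fin d} {b : Fin (CB.n a)} {b' : Fin (CB.n a')},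
      (⟨a, b⟩ : Σ x : Fin d, Fin (CB.n x)) = ⟨a', b'⟩ → ∀ (ha : a = a'),
      Fin.cast (congrArg CB.n ha) b = b' := by
    intro a a' b b' e ha
    subst ha
    injection e with e1 e2
  have hK'cast : ∀ {j j' : Fin d} (e : j = j') (k : Fin (CB.n j)),
      (⟨J' j' (Fin.cast (congrArg CB.n e) k), K' j' (Fin.cast (congrArg CB.n e) k)⟩ :
        Σ x : Fin d, Fin (CA.n x)) = ⟨J' j k, K' j k⟩ := by
    rintro j _ rfl k; rfl
  have hKcast : ∀ {a a' : Fin d} (e : a = a') (k : Fin (CA.n a)),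
      (⟨J a' (Fin.cast (congrArg CA.n e) k), K a' (Fin.cast (congrArg CA.n e) k)⟩ :
        Σ x : Fin d, Fin (CB.n x)) = ⟨J a k, K a k⟩ := by
    rintro a _ rfl k; rfl
  have hgf : ∀ (i : Fin d) (k : Fin (CA.n i)), g i (f i k) = k := by
    intro i k
    have e : (⟨J' (σ0 i) (f i k), K' (σ0 i) (f i k)⟩ : Σ x : Fin d, Fin (CA.n x)) = ⟨i, k⟩ := by
      rw [hfdef]
      calc (⟨J' (σ0 i) (Fin.cast (congrArg CB.n (hJconst i k)) (K i k)),
              K' (σ0 i) (Fin.cast (congrArg CB.n (hJconst i k)) (K i k))⟩ :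
              Σ x : Fin d, Fin (CA.n x))
          = ⟨J' (J i k) (K i k), K' (J i k) (K i k)⟩ := hK'cast (hJconst i k) (K i k)
        _ = ⟨i, k⟩ := hrt1 i k
    exact sndA e (hJ'const i (f i k))
  have hfg : ∀ (i : Fin d) (k' : Fin (CB.n (σ0 i))), f i (g i k') = k' := by
    intro i k'
    have e : (⟨J i (g i k'), K i (g i k')⟩ : Σ x : Fin d, Fin (CB.n x)) = ⟨σ0 i, k'⟩ := by
      rw [hgdef]
      calc (⟨J i (Fin.cast (congrArg CA.n (hJ'const i k')) (K' (σ0 i) k')),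
              K i (Fin.cast (congrArg CA.n (hJ'const i k')) (K' (σ0 i) k'))⟩ :
              Σ x : Fin d, Fin (CB.n x))
          = ⟨J (J' (σ0 i) k') (K' (σ0 i) k'), K (J' (σ0 i) k') (K' (σ0 i) k')⟩ :=
            hKcast (hJ'const i k') (K' (σ0 i) k')
        _ = ⟨σ0 i, k'⟩ := hrt2 (σ0 i) k'
    exact sndB e (hJconst i (g i k'))
  -- half images
  have hhalves : ∀ (i : Fin d) (k : Fin (CA.n i)),
      (h '' GammaPos S i (CA.A i k) = GammaPos S' (σ0 i) (CB.A (σ0 i) (f i k)) ∧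
       h '' GammaNeg S i (CA.A i k) = GammaNeg S' (σ0 i) (CB.A (σ0 i) (f i k))) ∨
      (h '' GammaPos S i (CA.A i k) = GammaNeg S' (σ0 i) (CB.A (σ0 i) (f i k)) ∧
       h '' GammaNeg S i (CA.A i k) = GammaPos S' (σ0 i) (CB.A (σ0 i) (f i k))) :=
    fun i k => halves_image hS hS' hdiff (CA.sep i k) (CB.sep (σ0 i) (f i k)) (hIMG i k)
  have hPosNeg : ∀ (j : Fin d) (k' : Fin (CB.n j)),
      GammaPos S' j (CB.A j k') ≠ GammaNeg S' j (CB.A j k') := by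
    intro j k' he
    obtain ⟨y, hy⟩ := (CB.sep j k').2.1.nonempty
    have : y ∈ GammaNeg S' j (CB.A j k') := he ▸ hy
    exact absurd this.2 (not_lt.2 (le_of_lt hy.2))
  -- pointwise equality transfer
  have hPt_eq : ∀ (i : Fin d) (k : Fin (CA.n i)), ∀ z ∈ S,
      (z i = CA.A i k ↔ h z (σ0 i) = CB.A (σ0 i) (f i k)) := by
    intro i k z hz
    constructor
    · intro he
      have : h z ∈ Gamma S' (σ0 i) (CB.A (σ0 i) (f i k)) := by
        rw [← hIMG i k]; exact mem_image_of_mem h ⟨hz, he⟩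
      exact this.2
    · intro he
      have : h z ∈ h '' Gamma S i (CA.A i k) := by
        rw [hIMG i k]; exact ⟨hdiff.mapsTo hz, he⟩
      obtain ⟨z', hz', heq⟩ := this
      rw [← hdiff.injOn hz'.1 hz heq]
      exact hz'.2
  -- branch constancy
  have hbranch : ∀ (i : Fin d) (k1 k2 : Fin (CA.n i)),
      (h '' GammaPos S i (CA.A i k1) = GammaPos S' (σ0 i) (CB.A (σ0 i) (f i k1)) ∧
       h '' GammaNeg S i (CA.A i k1) = GammaNeg S' (σ0 i) (CB.A (σ0 i) (f i k1))) →
      (h '' GammaPos S i (CA.A i k2) = GammaNeg S' (σ0 i) (CB.A (σ0 i) (f i k2)) ∧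
       h '' GammaNeg S i (CA.A i k2) = GammaPos S' (σ0 i) (CB.A (σ0 i) (f i k2))) →
      False := by
    intro i k1 k2 hP hN
    obtain ⟨z1, hz1⟩ := (CA.sep i k1).1.nonempty
    obtain ⟨z2, hz2⟩ := (CA.sep i k2).1.nonempty
    have hB1 : h z1 (σ0 i) = CB.A (σ0 i) (f i k1) := (hPt_eq i k1 z1 hz1.1).1 hz1.2
    have hB2 : h z2 (σ0 i) = CB.A (σ0 i) (f i k2) := (hPt_eq i k2 z2 hz2.1).1 hz2.2
    rcases lt_trichotomy (CA.A i k1) (CA.A i k2) with hlt | heqq | hgt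
    · -- A k1 < A k2
      have m1 : h z2 ∈ GammaPos S' (σ0 i) (CB.A (σ0 i) (f i k1)) := by
        rw [← hP.1]
        exact mem_image_of_mem h ⟨hz2.1, by rw [hz2.2]; exact hlt⟩
      have m2 : h z1 ∈ GammaPos S' (σ0 i) (CB.A (σ0 i) (f i k2)) := by
        rw [← hN.2]
        exact mem_image_of_mem h ⟨hz1.1, by rw [hz1.2]; exact hlt⟩
      have e1 : CB.A (σ0 i) (f i k1) < CB.A (σ0 i) (f i k2) := by
        have := m1.2; rw [hB2] at this; exact this
      have e2 : CB.A (σ0 i) (f i k2) < CB.A (σ0 i) (f i k1) := by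
        have := m2.2; rw [hB1] at this; exact this
      linarith
    · -- equal thresholds: k1 = k2, Pos' = Neg' contradiction
      have hk : k1 = k2 := (CA.mono i).injective heqq
      subst hk
      exact hPosNeg (σ0 i) (f i k1) (hP.1.symm.trans hN.1)
    · -- A k2 < A k1
      have m1 : h z1 ∈ GammaNeg S' (σ0 i) (CB.A (σ0 i) (f i k2)) := by
        rw [← hN.1]
        exact mem_image_of_mem h ⟨hz1.1, by rw [hz1.2]; exact hgt⟩
      have m2 : h z2 ∈ GammaNeg S' (σ0 i) (CB.A (σ0 i) (f i k1)) := by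
        rw [← hP.2]
        exact mem_image_of_mem h ⟨hz2.1, by rw [hz2.2]; exact hgt⟩
      have e1 : CB.A (σ0 i) (f i k1) < CB.A (σ0 i) (f i k2) := by
        have := m1.2; rw [hB1] at this; exact this
      have e2 : CB.A (σ0 i) (f i k2) < CB.A (σ0 i) (f i k1) := by
        have := m2.2; rw [hB2] at this; exact this
      linarith
  -- choose orientation
  set k0 : (i : Fin d) → Fin (CA.n i) := fun i => ⟨0, CA.n_pos i⟩ with hk0def
  set s : Fin d → ℤ := fun i =>
    if h '' GammaPos S i (CA.A i (k0 i))
        = GammaPos S' (σ0 i) (CB.A (σ0 i) (f i (k0 i))) then 1 else -1 with hsdef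
  refine ⟨Equiv.ofBijective _ hbij, s, ?_, ?_⟩
  · intro i
    by_cases hc : h '' GammaPos S i (CA.A i (k0 i))
        = GammaPos S' (σ0 i) (CB.A (σ0 i) (f i (k0 i)))
    · left; simp [hsdef, hc]
    · right; simp [hsdef, hc]
  · intro i z hz
    have hσapp : (Equiv.ofBijective _ hbij) i = σ0 i := rfl
    rw [hσapp]
    by_cases hc : h '' GammaPos S i (CA.A i (k0 i))
        = GammaPos S' (σ0 i) (CB.A (σ0 i) (f i (k0 i)))
    · -- orientation preserving
      have hs1 : s i = 1 := by simp [hsdef, hc]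
      have hPk0 : h '' GammaPos S i (CA.A i (k0 i))
            = GammaPos S' (σ0 i) (CB.A (σ0 i) (f i (k0 i))) ∧
          h '' GammaNeg S i (CA.A i (k0 i))
            = GammaNeg S' (σ0 i) (CB.A (σ0 i) (f i (k0 i))) := by
        rcases hhalves i (k0 i) with hh | hh
        · exact hh
        · exact absurd (hc.symm.trans hh.1) (hPosNeg _ _)
      have hPall : ∀ k : Fin (CA.n i),
          h '' GammaPos S i (CA.A i k) = GammaPos S' (σ0 i) (CB.A (σ0 i) (f i k)) ∧
          h '' GammaNeg S i (CA.A i k) = GammaNeg S' (σ0 i) (CB.A (σ0 i) (f i k)) := by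
        intro k
        rcases hhalves i k with hh | hh
        · exact hh
        · exact absurd (hbranch i (k0 i) k hPk0 hh) not_false
      have hiff : ∀ k : Fin (CA.n i),
          (CA.A i k ≤ z i ↔ CB.A (σ0 i) (f i k) ≤ h z (σ0 i)) := by
        intro k
        constructor
        · intro hle
          rcases lt_or_eq_of_le hle with hlt | heqv
          · have : h z ∈ GammaPos S' (σ0 i) (CB.A (σ0 i) (f i k)) := by
              rw [← (hPall k).1]
              exact mem_image_of_mem h ⟨hz, hlt⟩
            exact le_of_lt this.2
          · exact le_of_eq ((hPt_eq i k z hz).1 heqv.symm).symm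
        · intro hle
          by_contra hlt
          push_neg at hlt
          have : h z ∈ GammaNeg S' (σ0 i) (CB.A (σ0 i) (f i k)) := by
            rw [← (hPall k).2]
            exact mem_image_of_mem h ⟨hz, hlt⟩
          exact absurd hle (not_le.2 this.2)
      rw [hs1]
      show Q (z i) (CA.A i) = Qsgn 1 (h z (σ0 i)) (CB.A (σ0 i))
      rw [Qsgn, if_pos rfl, Q, Q]
      apply Finset.card_bij' (fun k _ => f i k) (fun k' _ => g i k')
      · intro k hk
        simp only [Finset.mem_filter, Finset.mem_univ, true_and] at hk ⊢
        exact (hiff k).1 hk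
      · intro k' hk'
        simp only [Finset.mem_filter, Finset.mem_univ, true_and] at hk' ⊢
        apply (hiff (g i k')).2
        rw [hfg i k']
        exact hk'
      · intro k _; exact hgf i k
      · intro k' _; exact hfg i k'
    · -- orientation reversing
      have hs1 : s i = -1 := by simp [hsdef, hc]
      have hNk0 : h '' GammaPos S i (CA.A i (k0 i))
            = GammaNeg S' (σ0 i) (CB.A (σ0 i) (f i (k0 i))) ∧
          h '' GammaNeg S i (CA.A i (k0 i))
            = GammaPos S' (σ0 i) (CB.A (σ0 i) (f i (k0 i))) := by
        rcases hhalves i (k0 i) with hh | hh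
        · exact absurd hh.1 hc
        · exact hh
      have hNall : ∀ k : Fin (CA.n i),
          h '' GammaPos S i (CA.A i k) = GammaNeg S' (σ0 i) (CB.A (σ0 i) (f i k)) ∧
          h '' GammaNeg S i (CA.A i k) = GammaPos S' (σ0 i) (CB.A (σ0 i) (f i k)) := by
        intro k
        rcases hhalves i k with hh | hh
        · exact absurd (hbranch i k (k0 i) hh hNk0) not_false
        · exact hh
      have hiff : ∀ k : Fin (CA.n i),
          (CA.A i k ≤ z i ↔ h z (σ0 i) ≤ CB.A (σ0 i) (f i k)) := by
        intro k
        constructor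
        · intro hle
          rcases lt_or_eq_of_le hle with hlt | heqv
          · have : h z ∈ GammaNeg S' (σ0 i) (CB.A (σ0 i) (f i k)) := by
              rw [← (hNall k).1]
              exact mem_image_of_mem h ⟨hz, hlt⟩
            exact le_of_lt this.2
          · exact le_of_eq ((hPt_eq i k z hz).1 heqv.symm)
        · intro hle
          by_contra hlt
          push_neg at hlt
          have : h z ∈ GammaPos S' (σ0 i) (CB.A (σ0 i) (f i k)) := by
            rw [← (hNall k).2]
            exact mem_image_of_mem h ⟨hz, hlt⟩
          exact absurd hle (not_le.2 this.2)
      rw [hs1]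
      show Q (z i) (CA.A i) = Qsgn (-1) (h z (σ0 i)) (CB.A (σ0 i))
      rw [Qsgn, if_neg (by norm_num), Q, Qneg]
      apply Finset.card_bij' (fun k _ => f i k) (fun k' _ => g i k')
      · intro k hk
        simp only [Finset.mem_filter, Finset.mem_univ, true_and] at hk ⊢
        exact (hiff k).1 hk
      · intro k' hk'
        simp only [Finset.mem_filter, Finset.mem_univ, true_and] at hk' ⊢
        apply (hiff (g i k')).2
        rw [hfg i k']
        exact hk'
      · intro k _; exact hgf i k
      · intro k' _; exact hfg i k'
end
end

section
/- Image of a separator is a separator: Let S and S' be open connected subsets of ℝ^d and h : S → S' a smooth diffeomorphism. Let 𝒢 be a finite set of axis-separators of S with union G = ⋃_{H ∈ 𝒢} H, and let 𝒢' be a finite set of axis-separators of S' with union G' = ⋃_{H' ∈ 𝒢'} H'. If h(G) = G', then for every H ∈ 𝒢 one has h(H) ∈ 𝒢'. -/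
open Set MeasureTheory Topology

noncomputable section

lemma fin_cover {X : Type*} [TopologicalSpace X] {ι : Type*} (C : ι → Set X)
    (hC : ∀ m, IsClosed (C m)) (F : Finset ι) {B : Set X}
    (hB : IsOpen B) (hne : B.Nonempty) (hcov : B ⊆ ⋃ m ∈ F, C m) :
    ∃ m ∈ F, (B ∩ interior (C m)).Nonempty := by
  classical
  induction F using Finset.induction_on generalizing B with
  | empty => obtain ⟨x, hx⟩ := hne; simpa using hcov hx
  | @insert a F ha ih =>
    by_cases hsub : B ⊆ C a
    · obtain ⟨x, hx⟩ := hne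
      exact ⟨a, Finset.mem_insert_self _ _, x, hx, interior_maximal hsub hB hx⟩
    · obtain ⟨x, hxB, hxC⟩ := Set.not_subset.mp hsub
      have hB' : IsOpen (B ∩ (C a)ᶜ) := hB.inter (hC a).isOpen_compl
      have hne' : (B ∩ (C a)ᶜ).Nonempty := ⟨x, hxB, hxC⟩
      have hcov' : B ∩ (C a)ᶜ ⊆ ⋃ m ∈ F, C m := by
        intro y hy
        have hy' := hcov hy.1
        simp only [Finset.mem_insert, Set.mem_iUnion, exists_prop] at hy' ⊢
        obtain ⟨m, hm, hyC⟩ := hy'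
        rcases hm with rfl | hm
        · exact absurd hyC hy.2
        · exact ⟨m, hm, hyC⟩
      obtain ⟨m, hm, y, hy1, hy2⟩ := ih hB' hne' hcov'
      exact ⟨m, Finset.mem_insert_of_mem hm, y, hy1.1, hy2⟩

lemma Gamma_subset_eq {d : ℕ} {S : Set (Euc d)} (hS : IsOpen S) {i i' : Fin d} {τ τ' : ℝ}
    (hne : (Gamma S i τ).Nonempty) (hsub : Gamma S i τ ⊆ Gamma S i' τ') :
    Gamma S i τ = Gamma S i' τ' := by
  obtain ⟨z, hzS, hzi⟩ := hne
  by_cases hii : i = i'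
  · subst hii
    have h2 := (hsub ⟨hzS, hzi⟩).2
    rw [show τ = τ' from hzi ▸ h2]
  · exfalso
    obtain ⟨ε, hε, hball⟩ := Metric.isOpen_iff.mp hS z hzS
    set v : Euc d := (ε/2) • EuclideanSpace.single i' (1:ℝ) with hv
    have hvnorm : ‖v‖ = ε/2 := by
      rw [hv, norm_smul, EuclideanSpace.norm_single]
      rw [norm_one, mul_one, Real.norm_eq_abs, abs_of_pos (by linarith : (0:ℝ) < ε/2)]
    have hwball : z + v ∈ Metric.ball z ε := by
      rw [Metric.mem_ball, dist_eq_norm]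
      simp only [add_sub_cancel_left]
      rw [hvnorm]; linarith
    have hwS : z + v ∈ S := hball hwball
    have hvi : v i = 0 := by
      simp [hv, PiLp.smul_apply, EuclideanSpace.single_apply, hii]
    have hvi' : v i' = ε/2 := by
      simp [hv, PiLp.smul_apply, EuclideanSpace.single_apply]
    have hwi : (z + v) i = τ := by
      rw [PiLp.add_apply, hvi, add_zero, hzi]
    have h1 := (hsub ⟨hwS, hwi⟩).2
    have h2 := (hsub ⟨hzS, hzi⟩).2
    rw [PiLp.add_apply, hvi', h2] at h1
    linarith

lemma key_subset {d : ℕ} {S S' : Set (Euc d)} (hS : IsOpen S) (hS' : IsOpen S')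
    {h hinv : Euc d → Euc d} (hdiff : IsSmoothDiffeoOn h hinv S S')
    {𝒢' : Set (Set (Euc d))} (h𝒢'fin : 𝒢'.Finite)
    (h𝒢' : ∀ H' ∈ 𝒢', ∃ (j : Fin d) (τ' : ℝ), H' = Gamma S' j τ')
    (i : Fin d) (τ : ℝ) (hHconn : IsConnected (Gamma S i τ))
    (hcov : ∀ z ∈ Gamma S i τ, h z ∈ ⋃₀ 𝒢') :
    ∃ H' ∈ 𝒢', h '' (Gamma S i τ) ⊆ H' := by
  classical
  have hfin : Nonempty (Fin d) := ⟨i⟩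
  choose! jf τf hspec using h𝒢'
  set u : Euc d := EuclideanSpace.single i (1:ℝ) with hu
  have hui : u i = 1 := by simp [hu, EuclideanSpace.single_apply]
  set L : Euc d →L[ℝ] Euc d :=
    ContinuousLinearMap.id ℝ (Euc d) - (EuclideanSpace.proj i).smulRight u with hL
  have hLapp : ∀ v : Euc d, L v = v - (v i) • u := by
    intro v
    simp [hL, ContinuousLinearMap.sub_apply, ContinuousLinearMap.smulRight_apply,
      EuclideanSpace.proj, PiLp.proj_apply]
  set φ : Euc d → Euc d := fun z => L z + τ • u with hφ
  have hφfix : ∀ z : Euc d, z i = τ → φ z = z := by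
    intro z hz
    rw [hφ]
    simp only [hLapp z, hz]
    abel
  have hφcoord : ∀ z, (φ z) i = τ := by
    intro z
    rw [hφ]
    simp only [PiLp.add_apply, PiLp.smul_apply, hLapp z, PiLp.sub_apply, hui,
      smul_eq_mul, mul_one]
    ring
  have hLfix : ∀ v : Euc d, v i = 0 → L v = v := by
    intro v hv; rw [hLapp, hv, zero_smul, sub_zero]
  set U : Set (Euc d) := φ ⁻¹' S with hUdef
  have hφcont : Continuous φ := (L.continuous).add continuous_const
  have hUopen : IsOpen U := hS.preimage hφcont
  have hφDiff : ∀ z, HasFDerivAt φ L z := fun z => (L.hasFDerivAt).add_const (τ • u)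
  set w : Euc d → Euc d := fun z => h (φ z) with hw
  have hφcd : ContDiff ℝ (⊤:ℕ∞) φ := (L.contDiff).add contDiff_const
  have hwcd : ContDiffOn ℝ (⊤:ℕ∞) w U :=
    hdiff.smooth.comp hφcd.contDiffOn (fun z hz => hz)
  have hhdiffat : ∀ z ∈ U, DifferentiableAt ℝ h (φ z) := fun z hz =>
    (hdiff.smooth.differentiableOn (by simp)).differentiableAt (hS.mem_nhds hz)
  have hwdiff : ∀ z ∈ U, DifferentiableAt ℝ w z := fun z hz =>
    ((hhdiffat z hz).comp z (hφDiff z).differentiableAt)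
  have hwfderiv : ∀ z ∈ U, fderiv ℝ w z = (fderiv ℝ h (φ z)).comp L := by
    intro z hz
    have : fderiv ℝ (h ∘ φ) z = (fderiv ℝ h (φ z)).comp (fderiv ℝ φ z) :=
      fderiv_comp z (hhdiffat z hz) (hφDiff z).differentiableAt
    rw [(hφDiff z).fderiv] at this
    exact this
  have hDwcont : ContinuousOn (fderiv ℝ w) U :=
    hwcd.continuousOn_fderiv_of_isOpen hUopen (by exact_mod_cast le_top)
  -- inverse derivative
  have hinvert : ∀ z ∈ U, ∀ y : Euc d,
      (fderiv ℝ h (φ z)) ((fderiv ℝ hinv (h (φ z))) y) = y := by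
    intro z hz y
    have hp : φ z ∈ S := hz
    have hq : h (φ z) ∈ S' := hdiff.mapsTo hp
    have hhinvq : DifferentiableAt ℝ hinv (h (φ z)) :=
      (hdiff.smooth_inv.differentiableOn (by simp)).differentiableAt (hS'.mem_nhds hq)
    have hinvq : hinv (h (φ z)) = φ z := hdiff.left_inv _ hp
    have hhdiffq : DifferentiableAt ℝ h (hinv (h (φ z))) := by
      rw [hinvq]; exact hhdiffat z hz
    have hid : (h ∘ hinv) =ᶠ[nhds (h (φ z))] id := by
      filter_upwards [hS'.mem_nhds hq] with y' hy' using hdiff.right_inv y' hy'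
    have h1 : fderiv ℝ (h ∘ hinv) (h (φ z)) = ContinuousLinearMap.id ℝ (Euc d) := by
      rw [hid.fderiv_eq, fderiv_id]
    have h2 : fderiv ℝ (h ∘ hinv) (h (φ z))
        = (fderiv ℝ h (hinv (h (φ z)))).comp (fderiv ℝ hinv (h (φ z))) :=
      fderiv_comp _ hhdiffq hhinvq
    rw [hinvq] at h2
    have := h2.symm.trans h1
    calc (fderiv ℝ h (φ z)) ((fderiv ℝ hinv (h (φ z))) y)
        = ((fderiv ℝ h (φ z)).comp (fderiv ℝ hinv (h (φ z)))) y := rfl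
      _ = y := by rw [this]; rfl
  -- slices
  have hφapp : ∀ z : Euc d, φ z = L z + τ • u := fun z => rfl
  set Zs : Set (Euc d) → Set (Euc d) := fun H' => {z | z ∈ U ∧ w z (jf H') = τf H'} with hZs
  set Vs : Set (Euc d) → Set (Euc d) := fun H' => interior (Zs H') with hVs
  have hval_closed : ∀ (j : Fin d) (t : ℝ), ∀ z ∈ U,
      z ∈ closure {x | x ∈ U ∧ w x j = t} → w z j = t := by
    intro j t z hzU hzcl
    obtain ⟨seq, hseqmem, hseqlim⟩ := mem_closure_iff_seq_limit.mp hzcl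
    have hcontw : ContinuousAt w z := hwcd.continuousOn.continuousAt (hUopen.mem_nhds hzU)
    have hcont : ContinuousAt (fun x => w x j) z :=
      ((EuclideanSpace.proj j).continuous.continuousAt).comp hcontw
    have h1 : Filter.Tendsto (fun n => w (seq n) j) Filter.atTop (nhds (w z j)) :=
      hcont.tendsto.comp hseqlim
    have h2 : (fun n => w (seq n) j) = fun _ => t := funext fun n => (hseqmem n).2
    rw [h2] at h1
    exact tendsto_nhds_unique h1 tendsto_const_nhds
  have hZsub : ∀ H', Vs H' ⊆ Zs H' := fun H' => interior_subset
  have hder_closed : ∀ H', ∀ z ∈ U, z ∈ closure (Vs H') →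
      ∀ v : Euc d, (fderiv ℝ w z) v (jf H') = 0 := by
    intro H' z hzU hzcl v
    have hVD : ∀ x ∈ Vs H', (fderiv ℝ w x) v (jf H') = 0 := by
      intro x hx
      have hxU : x ∈ U := (hZsub H' hx).1
      have hwx : DifferentiableAt ℝ w x := hwdiff x hxU
      have hloc : (⇑(EuclideanSpace.proj (jf H')) ∘ w) =ᶠ[nhds x]
          (fun _ => τf H') := by
        filter_upwards [isOpen_interior.mem_nhds hx] with y hy
        exact (hZsub H' hy).2
      have h1 : fderiv ℝ (⇑(EuclideanSpace.proj (jf H')) ∘ w) x = 0 := by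
        rw [hloc.fderiv_eq]
        exact fderiv_const_apply _
      have h2 := ((EuclideanSpace.proj (jf H')).hasFDerivAt.comp x hwx.hasFDerivAt).fderiv
      have h3 : (EuclideanSpace.proj (jf H')).comp (fderiv ℝ w x) = 0 := by
        rw [← h2]; exact h1
      have h4 := congrArg (fun (T : Euc d →L[ℝ] ℝ) => T v) h3
      simpa using h4
    obtain ⟨seq, hseqmem, hseqlim⟩ := mem_closure_iff_seq_limit.mp hzcl
    have hc1 : ContinuousAt (fderiv ℝ w) z := hDwcont.continuousAt (hUopen.mem_nhds hzU)
    have hc2 : ContinuousAt (fun x => (fderiv ℝ w x) v (jf H')) z :=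
      ((EuclideanSpace.proj (jf H')).continuous.continuousAt).comp
        (((ContinuousLinearMap.apply ℝ (Euc d) v).continuous.continuousAt).comp hc1)
    have h1 : Filter.Tendsto (fun n => (fderiv ℝ w (seq n)) v (jf H')) Filter.atTop
        (nhds ((fderiv ℝ w z) v (jf H'))) := hc2.tendsto.comp hseqlim
    have h2 : (fun n => (fderiv ℝ w (seq n)) v (jf H')) = fun _ => 0 :=
      funext fun n => hVD _ (hseqmem n)
    rw [h2] at h1
    exact tendsto_nhds_unique h1 tendsto_const_nhds
  have hdisj : ∀ H1 ∈ 𝒢', ∀ H2 ∈ 𝒢', H1 ≠ H2 → ∀ z ∈ U,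
      z ∈ closure (Vs H1) → z ∈ closure (Vs H2) → False := by
    intro H1 hH1 H2 hH2 hne z hzU hz1 hz2
    have hval1 : w z (jf H1) = τf H1 :=
      hval_closed _ _ z hzU (closure_mono (hZsub H1) hz1)
    have hval2 : w z (jf H2) = τf H2 :=
      hval_closed _ _ z hzU (closure_mono (hZsub H2) hz2)
    by_cases hjj : jf H1 = jf H2
    · apply hne
      rw [hspec H1 hH1, hspec H2 hH2, hjj,
        show τf H1 = τf H2 from by rw [← hval1, ← hval2, hjj]]
    · set D := fderiv ℝ h (φ z) with hD
      set Bm := fderiv ℝ hinv (h (φ z)) with hBm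
      have hDB : ∀ y, D (Bm y) = y := hinvert z hzU
      have hker : ∀ v : Euc d, v i = 0 → (D v) (jf H1) = 0 ∧ (D v) (jf H2) = 0 := by
        intro v hv
        have h1 := hder_closed H1 z hzU hz1 v
        have h2 := hder_closed H2 z hzU hz2 v
        rw [hwfderiv z hzU, ContinuousLinearMap.comp_apply, hLfix v hv] at h1 h2
        exact ⟨h1, h2⟩
      have hdecomp : ∀ (y : Euc d) (jj : Fin d), (∀ v : Euc d, v i = 0 → (D v) jj = 0) →
          y jj = (Bm y) i * (D u) jj := by
        intro y jj hvan
        set v : Euc d := Bm y - (Bm y) i • u with hv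
        have hvi : v i = 0 := by
          rw [hv]
          simp [PiLp.sub_apply, PiLp.smul_apply, hui]
        have key : (D ((Bm y) i • u + v)) jj = (Bm y) i * (D u) jj := by
          rw [map_add, _root_.map_smul, PiLp.add_apply, PiLp.smul_apply, hvan v hvi, add_zero,
            smul_eq_mul]
        have hBy : (Bm y) i • u + v = Bm y := by rw [hv]; abel
        rw [hBy, hDB y] at key
        exact key
      have e11 := hdecomp (EuclideanSpace.single (jf H1) 1) (jf H1) (fun v hv => (hker v hv).1)
      have e12 := hdecomp (EuclideanSpace.single (jf H1) 1) (jf H2) (fun v hv => (hker v hv).2)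
      have e22 := hdecomp (EuclideanSpace.single (jf H2) 1) (jf H2) (fun v hv => (hker v hv).2)
      rw [EuclideanSpace.single_apply, if_pos rfl] at e11 e22
      rw [EuclideanSpace.single_apply, if_neg (fun hc => hjj hc.symm)] at e12
      have hb1 : (Bm (EuclideanSpace.single (jf H1) 1)) i ≠ 0 := by
        intro hc; rw [hc, zero_mul] at e11; exact one_ne_zero e11
      have hDu2 : (D u) (jf H2) = 0 := by
        rcases mul_eq_zero.mp e12.symm with hc | hc
        · exact absurd hc hb1
        · exact hc
      rw [hDu2, mul_zero] at e22
      exact one_ne_zero e22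
  -- finite covering
  set F := h𝒢'fin.toFinset with hF
  have hUcovZ : U ⊆ ⋃ H' ∈ F, Zs H' := by
    intro z hzU
    have hφz : φ z ∈ Gamma S i τ := ⟨hzU, hφcoord z⟩
    obtain ⟨H', hH', hmem⟩ := hcov (φ z) hφz
    have hsp := hspec H' hH'
    rw [hsp] at hmem
    exact Set.mem_biUnion (h𝒢'fin.mem_toFinset.mpr hH') ⟨hzU, hmem.2⟩
  have hVmem : ∀ H', ∀ x, x ∈ U → x ∈ interior (closure (Zs H')) → x ∈ Vs H' := by
    intro H' x hxU hxint
    have hO : IsOpen (interior (closure (Zs H')) ∩ U) := isOpen_interior.inter hUopen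
    have hsubZ : interior (closure (Zs H')) ∩ U ⊆ Zs H' := by
      intro y hy
      exact ⟨hy.2, hval_closed _ _ y hy.2 (interior_subset hy.1)⟩
    exact interior_maximal hsubZ hO ⟨hxint, hxU⟩
  have hAcov : ∀ z ∈ U, ∃ H' ∈ F, z ∈ closure (Vs H') := by
    by_contra hbad
    push_neg at hbad
    obtain ⟨z, hzU, hz⟩ := hbad
    set Bad := U ∩ (⋃ H' ∈ F, closure (Vs H'))ᶜ with hBad
    have hBadopen : IsOpen Bad := hUopen.inter
      (Set.Finite.isClosed_biUnion F.finite_toSet (fun _ _ => isClosed_closure)).isOpen_compl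
    have hBadne : Bad.Nonempty := by
      refine ⟨z, hzU, fun hmem => ?_⟩
      obtain ⟨H', hH'F, hzcl⟩ := Set.mem_iUnion₂.mp hmem
      exact hz H' hH'F hzcl
    have hBadcov : Bad ⊆ ⋃ H' ∈ F, closure (Zs H') := by
      intro y hy
      obtain ⟨H', hH'F, hyZ⟩ := Set.mem_iUnion₂.mp (hUcovZ hy.1)
      exact Set.mem_biUnion hH'F (subset_closure hyZ)
    obtain ⟨H', hH'F, x, hxBad, hxint⟩ :=
      fin_cover _ (fun _ => isClosed_closure) F hBadopen hBadne hBadcov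
    have hxV : x ∈ Vs H' := hVmem H' x hxBad.1 hxint
    exact hxBad.2 (Set.mem_biUnion hH'F (subset_closure hxV))
  -- connectedness of U
  obtain ⟨z0, hz0⟩ := hHconn.nonempty
  have hHU : Gamma S i τ ⊆ U := by
    intro z hz
    show φ z ∈ S
    rw [hφfix z hz.2]
    exact hz.1
  have hLu : L u = 0 := by rw [hLapp, hui, one_smul, sub_self]
  have hLzi : ∀ z : Euc d, (L z) i = 0 := by
    intro z; rw [hLapp]; simp [PiLp.sub_apply, PiLp.smul_apply, hui]
  have hLL : ∀ z : Euc d, L (L z) = L z := by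
    intro z; rw [hLapp (L z), hLzi z, zero_smul, sub_zero]
  have hφφ : ∀ (a b : ℝ), a + b = 1 → ∀ z : Euc d, φ (a • z + b • φ z) = φ z := by
    intro a b hab z
    have hLφz : L (φ z) = L z := by
      rw [hφapp z, map_add, _root_.map_smul, hLu, smul_zero, add_zero, hLL]
    rw [hφapp (a • z + b • φ z), map_add, _root_.map_smul, _root_.map_smul, hLφz, ← add_smul, hab,
      one_smul, ← hφapp z]
  have hUconn : IsPreconnected U := by
    have hTsub : ∀ z ∈ U, segment ℝ z (φ z) ∪ Gamma S i τ ⊆ U := by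
      intro z hz
      apply Set.union_subset _ hHU
      rintro p ⟨a, b, ha, hb, hab, rfl⟩
      show φ (a • z + b • φ z) ∈ S
      rw [hφφ a b hab z]
      exact hz
    have hTconn : ∀ z ∈ U, IsPreconnected (segment ℝ z (φ z) ∪ Gamma S i τ) := by
      intro z hz
      exact IsPreconnected.union (φ z) (right_mem_segment ℝ z (φ z)) ⟨hz, hφcoord z⟩
        (convex_segment z (φ z)).isPreconnected hHconn.isPreconnected
    have hUeq : U = ⋃ z ∈ U, (segment ℝ z (φ z) ∪ Gamma S i τ) := by
      apply Set.Subset.antisymm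
      · intro z hz
        exact Set.mem_biUnion hz (Or.inl (left_mem_segment ℝ z (φ z)))
      · exact Set.iUnion₂_subset hTsub
    rw [hUeq, ← Set.sUnion_image]
    apply isPreconnected_sUnion z0
    · rintro s ⟨z, hz, rfl⟩; exact Or.inr hz0
    · rintro s ⟨z, hz, rfl⟩; exact hTconn z hz
  -- conclusion
  have hz0U : z0 ∈ U := hHU hz0
  obtain ⟨H0, hH0F, hz0cl⟩ := hAcov z0 hz0U
  have hH0mem : H0 ∈ 𝒢' := h𝒢'fin.mem_toFinset.mp hH0F
  have hallcl : ∀ z ∈ U, z ∈ closure (Vs H0) := by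
    set O1 := U ∩ (⋃ H' ∈ F.erase H0, closure (Vs H'))ᶜ with hO1
    set O2 := U ∩ (closure (Vs H0))ᶜ with hO2
    have hO1open : IsOpen O1 := hUopen.inter
      (Set.Finite.isClosed_biUnion (F.erase H0).finite_toSet
        (fun _ _ => isClosed_closure)).isOpen_compl
    have hO2open : IsOpen O2 := hUopen.inter isClosed_closure.isOpen_compl
    have hdisj12 : Disjoint O1 O2 := by
      rw [Set.disjoint_left]
      intro x hx1 hx2
      obtain ⟨H', hH'F, hxcl⟩ := hAcov x hx1.1
      by_cases hHH : H' = H0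
      · rw [hHH] at hxcl; exact hx2.2 hxcl
      · exact hx1.2 (Set.mem_biUnion (Finset.mem_erase.mpr ⟨hHH, hH'F⟩) hxcl)
    have hcov12 : U ⊆ O1 ∪ O2 := by
      intro x hx
      by_cases hxcl : x ∈ closure (Vs H0)
      · refine Or.inl ⟨hx, fun hmem => ?_⟩
        obtain ⟨H', hH'F, hxcl'⟩ := Set.mem_iUnion₂.mp hmem
        exact hdisj H0 hH0mem H' (h𝒢'fin.mem_toFinset.mp (Finset.mem_of_mem_erase hH'F))
          (Finset.ne_of_mem_erase hH'F).symm x hx hxcl hxcl'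
      · exact Or.inr ⟨hx, hxcl⟩
    rcases hUconn.subset_or_subset hO1open hO2open hdisj12 hcov12 with hsub | hsub
    · intro z hz
      by_contra hzcl
      obtain ⟨H', hH'F, hxcl⟩ := hAcov z hz
      have hH'ne : H' ≠ H0 := fun hc => hzcl (hc ▸ hxcl)
      exact (hsub hz).2 (Set.mem_biUnion (Finset.mem_erase.mpr ⟨hH'ne, hH'F⟩) hxcl)
    · exact absurd (hsub hz0U).2 (fun hc => hc hz0cl)
  refine ⟨H0, hH0mem, ?_⟩
  rintro _ ⟨z, hz, rfl⟩
  rw [hspec H0 hH0mem]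
  have hzU : z ∈ U := hHU hz
  have hval : w z (jf H0) = τf H0 :=
    hval_closed _ _ z hzU (closure_mono (hZsub H0) (hallcl z hzU))
  have hwz : w z = h z := by simp only [hw]; rw [hφfix z hz.2]
  exact ⟨hdiff.mapsTo hz.1, by rw [← hwz]; exact hval⟩

/-- **Image of a separator is a separator.** -/
theorem image_of_separator_is_separator
    {d : ℕ} {S S' : Set (Euc d)} (hS : IsOpen S) (hSc : IsConnected S)
    (hS' : IsOpen S') (hS'c : IsConnected S')
    {h hinv : Euc d → Euc d} (hdiff : IsSmoothDiffeoOn h hinv S S')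
    (𝒢 𝒢' : Set (Set (Euc d))) (h𝒢fin : 𝒢.Finite) (h𝒢'fin : 𝒢'.Finite)
    (h𝒢 : ∀ H ∈ 𝒢, ∃ (i : Fin d) (τ : ℝ), H = Gamma S i τ ∧ IsAxisSeparator S i τ)
    (h𝒢' : ∀ H' ∈ 𝒢', ∃ (j : Fin d) (τ : ℝ), H' = Gamma S' j τ ∧ IsAxisSeparator S' j τ)
    (hG : h '' (⋃₀ 𝒢) = ⋃₀ 𝒢') :
    ∀ H ∈ 𝒢, h '' H ∈ 𝒢' := by
  intro H hH
  obtain ⟨i, τ, hHeq, hsep⟩ := h𝒢 H hH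
  have hGsubS : ⋃₀ 𝒢 ⊆ S := by
    intro z hz
    obtain ⟨H1, hH1, hz1⟩ := hz
    obtain ⟨i1, τ1, hEq, _⟩ := h𝒢 H1 hH1
    rw [hEq] at hz1
    exact hz1.1
  have h𝒢₁ : ∀ H' ∈ 𝒢', ∃ (j : Fin d) (τ' : ℝ), H' = Gamma S' j τ' := by
    intro H' hH'
    obtain ⟨j, τ', he, _⟩ := h𝒢' H' hH'
    exact ⟨j, τ', he⟩
  have h𝒢₂ : ∀ H1 ∈ 𝒢, ∃ (i1 : Fin d) (τ1 : ℝ), H1 = Gamma S i1 τ1 := by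
    intro H1 hH1
    obtain ⟨i1, τ1, he, _⟩ := h𝒢 H1 hH1
    exact ⟨i1, τ1, he⟩
  have hcov1 : ∀ z ∈ Gamma S i τ, h z ∈ ⋃₀ 𝒢' := by
    intro z hz
    rw [← hG]
    exact ⟨z, ⟨H, hH, hHeq ▸ hz⟩, rfl⟩
  obtain ⟨H', hH', hsub1⟩ := key_subset hS hS' hdiff h𝒢'fin h𝒢₁ i τ hsep.1 hcov1
  obtain ⟨j', τ', hH'eq, hsep'⟩ := h𝒢' H' hH'
  have hdiff' : IsSmoothDiffeoOn hinv h S' S :=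
    ⟨hdiff.mapsTo_inv, hdiff.mapsTo, hdiff.right_inv, hdiff.left_inv,
      hdiff.smooth_inv, hdiff.smooth⟩
  have hcov2 : ∀ z' ∈ Gamma S' j' τ', hinv z' ∈ ⋃₀ 𝒢 := by
    intro z' hz'
    have hz'' : z' ∈ ⋃₀ 𝒢' := ⟨H', hH', hH'eq ▸ hz'⟩
    rw [← hG] at hz''
    obtain ⟨g, hg, rfl⟩ := hz''
    rw [hdiff.left_inv g (hGsubS hg)]
    exact hg
  obtain ⟨H'', hH'', hsub2⟩ := key_subset hS' hS hdiff' h𝒢fin h𝒢₂ j' τ' hsep'.1 hcov2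
  obtain ⟨i'', τ'', hH''eq, hsep''⟩ := h𝒢 H'' hH''
  have hHsubH'' : Gamma S i τ ⊆ Gamma S i'' τ'' := by
    intro z hz
    have h1 : h z ∈ H' := hsub1 ⟨z, hz, rfl⟩
    rw [hH'eq] at h1
    have h2 : hinv (h z) ∈ H'' := hsub2 ⟨h z, h1, rfl⟩
    rw [hdiff.left_inv z hz.1, hH''eq] at h2
    exact h2
  have hEq2 : Gamma S i τ = Gamma S i'' τ'' :=
    Gamma_subset_eq hS hsep.1.nonempty hHsubH''
  have himg : h '' H = H' := by
    apply Set.Subset.antisymm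
    · rw [hHeq]; exact hsub1
    · intro z' hz'
      rw [hH'eq] at hz'
      have hz'S' : z' ∈ S' := hz'.1
      have h2 : hinv z' ∈ H'' := hsub2 ⟨z', hz', rfl⟩
      rw [hH''eq, ← hEq2] at h2
      rw [hHeq]
      exact ⟨hinv z', h2, hdiff.right_inv z' hz'S'⟩
  rw [himg]
  exact hH'
end
end
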